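/- arXiv:2405.04040 — 4 statements merged into one kernel-verified Lean document; each statement's English description precedes it below -/
import Mathlib

section
/- If f(z) = Σ_{n=0}^∞ a_n z^n is analytic on the unit disk with |f(z)| ≤ 1 for all |z| < 1, then Σ_{n=0}^∞ |a_n| r^n ≤ 1 for all 0 ≤ r ≤ 1/3. -/
set_option maxHeartbeats 1600000

open Complex Metric Filter FormalMultilinearSeries
lemma bohr_summable {b : ℕ → ℂ} {F : ℂ → ℂ}
    (h : ∀ z ∈ Metric.ball (0 : ℂ) 1, HasSum (fun k => b k * z ^ k) (F z))
    {s : ℝ} (hs0 : 0 ≤ s) (hs1 : s < 1) :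
    Summable (fun k => ‖b k‖ * s ^ k) := by
  obtain ⟨t, hst, ht1⟩ : ∃ t, s < t ∧ t < 1 := ⟨(1 + s) / 2, by linarith, by linarith⟩
  have ht0 : 0 < t := hs0.trans_lt hst
  have htb : (t : ℂ) ∈ Metric.ball (0 : ℂ) 1 := by
    rw [mem_ball_zero_iff, Complex.norm_real, Real.norm_eq_abs]
    rwa [abs_of_pos ht0]
  have htend : Tendsto (fun k => ‖b k * (t : ℂ) ^ k‖) atTop (nhds 0) := by
    simpa using ((h _ htb).summable.tendsto_atTop_zero).norm
  obtain ⟨C, hC⟩ : ∃ C, ∀ k, ‖b k * (t : ℂ) ^ k‖ ≤ C := by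
    obtain ⟨C, hC⟩ := htend.bddAbove_range
    exact ⟨C, fun k => hC (Set.mem_range_self k)⟩
  refine Summable.of_nonneg_of_le (f := fun k => C * (s / t) ^ k)
    (fun k => mul_nonneg (norm_nonneg _) (pow_nonneg hs0 _)) ?_ ?_
  · intro k
    have h1 : ‖b k‖ * t ^ k ≤ C := by
      have := hC k
      rwa [norm_mul, norm_pow, Complex.norm_real, Real.norm_eq_abs, abs_of_pos ht0] at this
    have htk : t ^ k ≠ 0 := (pow_pos ht0 k).ne'
    have h2 : ‖b k‖ * s ^ k = (‖b k‖ * t ^ k) * (s / t) ^ k := by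
      rw [div_pow, mul_assoc, mul_div_assoc', mul_div_cancel_left₀ _ htk]
    rw [h2]
    have : (0:ℝ) ≤ (s / t) ^ k := pow_nonneg (div_nonneg hs0 ht0.le) _
    nlinarith
  · exact (summable_geometric_of_lt_one (div_nonneg hs0 ht0.le) (by
      rw [div_lt_one ht0]; exact hst)).mul_left C

lemma bohr_ofScalars_coeff (b : ℕ → ℂ) (n : ℕ) : (ofScalars ℂ b).coeff n = b n := by
  simp [FormalMultilinearSeries.coeff, ofScalars, Pi.one_def]

lemma bohr_hasFPowerSeriesOnBall {b : ℕ → ℂ} {F : ℂ → ℂ} {s : NNReal} (hs : 0 < s)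
    (hsum : ∀ z : ℂ, ‖z‖ < (s : ℝ) → HasSum (fun k => b k * z ^ k) (F z))
    (hnorm : Summable fun k => ‖b k‖ * (s : ℝ) ^ k) :
    HasFPowerSeriesOnBall F (ofScalars ℂ b) 0 s := by
  refine ⟨?_, by exact_mod_cast hs, ?_⟩
  · apply le_radius_of_summable_norm
    simpa [FormalMultilinearSeries.norm_apply_eq_norm_coef, bohr_ofScalars_coeff] using hnorm
  · intro y hy
    rw [mem_emetric_ball_zero_iff] at hy
    have hy' : ‖y‖ < (s : ℝ) := by exact_mod_cast hy
    have := hsum y hy'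
    simp only [ofScalars_apply_eq, smul_eq_mul, zero_add]
    exact this

lemma bohr_unique {b b' : ℕ → ℂ} {F : ℂ → ℂ} {s : NNReal}
    (h1 : HasFPowerSeriesOnBall F (ofScalars ℂ b) 0 s)
    (h2 : HasFPowerSeriesOnBall F (ofScalars ℂ b') 0 s) : b = b' :=
  (ofScalars_series_eq_iff ℂ b b').mp
    (h1.hasFPowerSeriesAt.eq_formalMultilinearSeries h2.hasFPowerSeriesAt)

lemma bohr_diffOn {b : ℕ → ℂ} {F : ℂ → ℂ}
    (h : ∀ z ∈ Metric.ball (0 : ℂ) 1, HasSum (fun k => b k * z ^ k) (F z)) :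
    DifferentiableOn ℂ F (Metric.ball (0 : ℂ) 1) := by
  intro z hz
  rw [mem_ball_zero_iff] at hz
  have hn : 0 ≤ ‖z‖ := norm_nonneg z
  set s : NNReal := ⟨(‖z‖ + 1) / 2, by linarith⟩ with hsdef
  have hs : (s : ℝ) = (‖z‖ + 1) / 2 := rfl
  have hzs : ‖z‖ < (s : ℝ) := by rw [hs]; linarith
  have hs1 : (s : ℝ) < 1 := by rw [hs]; linarith
  have hs0 : 0 < s := by
    rw [← NNReal.coe_lt_coe, NNReal.coe_zero, hs]; linarith
  have hball := bohr_hasFPowerSeriesOnBall hs0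
    (fun w hw => h w (mem_ball_zero_iff.mpr (hw.trans hs1)))
    (bohr_summable h (by rw [hs]; linarith) hs1)
  have hzmem : z ∈ Metric.eball (0 : ℂ) (s : ENNReal) := by
    rw [mem_emetric_ball_zero_iff]
    exact_mod_cast hzs
  exact (hball.analyticAt_of_mem hzmem).differentiableAt.differentiableWithinAt

lemma bohr_moebius_norm {α w : ℂ} (hα : ‖α‖ < 1) (hw : ‖w‖ ≤ 1) :
    ‖w - α‖ ≤ ‖1 - (starRingEnd ℂ) α * w‖ := by
  have hkey : Complex.normSq (1 - (starRingEnd ℂ) α * w) - Complex.normSq (w - α)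
      = (1 - Complex.normSq α) * (1 - Complex.normSq w) := by
    simp only [Complex.normSq_apply, Complex.sub_re, Complex.sub_im, Complex.mul_re,
      Complex.mul_im, Complex.one_re, Complex.one_im, Complex.conj_re, Complex.conj_im]
    ring
  have hα2 : Complex.normSq α < 1 := by
    rw [Complex.normSq_eq_norm_sq]
    nlinarith [norm_nonneg α]
  have hw2 : Complex.normSq w ≤ 1 := by
    rw [Complex.normSq_eq_norm_sq]
    nlinarith [norm_nonneg w]
  have h2 : Complex.normSq (w - α) ≤ Complex.normSq (1 - (starRingEnd ℂ) α * w) := by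
    nlinarith
  rw [Complex.norm_def, Complex.norm_def]
  exact Real.sqrt_le_sqrt h2

lemma bohr_hasSum_mul {u c : ℕ → ℂ} {U C : ℂ} {z : ℂ}
    (hu : HasSum (fun k => u k * z ^ k) U) (hc : HasSum (fun k => c k * z ^ k) C)
    (hun : Summable fun k => ‖u k * z ^ k‖) (hcn : Summable fun k => ‖c k * z ^ k‖) :
    HasSum (fun k => (∑ j ∈ Finset.range (k + 1), u j * c (k - j)) * z ^ k) (U * C) := by
  have heq : ∀ k, ∑ j ∈ Finset.range (k + 1), (u j * z ^ j) * (c (k - j) * z ^ (k - j))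
      = (∑ j ∈ Finset.range (k + 1), u j * c (k - j)) * z ^ k := by
    intro k
    rw [Finset.sum_mul]
    apply Finset.sum_congr rfl
    intro j hj
    rw [Finset.mem_range, Nat.lt_succ_iff] at hj
    have hkj : j + (k - j) = k := Nat.add_sub_cancel' hj
    calc (u j * z ^ j) * (c (k - j) * z ^ (k - j))
        = u j * c (k - j) * (z ^ j * z ^ (k - j)) := by ring
      _ = u j * c (k - j) * z ^ k := by rw [← pow_add, hkj]
  have hsumnorm := summable_norm_sum_mul_range_of_summable_norm hun hcn
  have hS : Summable (fun k => (∑ j ∈ Finset.range (k + 1), u j * c (k - j)) * z ^ k) := by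
    apply Summable.of_norm
    apply Summable.congr hsumnorm
    intro k
    rw [heq k]
  rw [Summable.hasSum_iff hS]
  have hmul := tsum_mul_tsum_eq_tsum_sum_range_of_summable_norm hun hcn
  rw [hu.tsum_eq, hc.tsum_eq] at hmul
  rw [hmul]
  exact tsum_congr fun k => (heq k).symm

lemma bohr_key {g : ℂ → ℂ} {b : ℕ → ℂ} {n : ℕ} (hn : 0 < n)
    (hsum : ∀ z ∈ Metric.ball (0 : ℂ) 1, HasSum (fun k => b k * z ^ k) (g z))
    (hgb : ∀ z ∈ Metric.ball (0 : ℂ) 1, ‖g z‖ ≤ 1)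
    (hmid : ∀ k, 0 < k → k < n → b k = 0)
    (hα : ‖b 0‖ < 1) :
    ‖b n‖ ≤ 1 - ‖b 0‖ ^ 2 := by
  have hg0 : g 0 = b 0 := by
    have h0 : HasSum (fun k => b k * (0 : ℂ) ^ k) (g 0) := hsum 0 (by simp)
    have h0' : HasSum (fun k => b k * (0 : ℂ) ^ k) (b 0) := by
      have := hasSum_single (f := fun k => b k * (0 : ℂ) ^ k) 0
        (fun k hk => by simp [zero_pow hk])
      simpa using this
    exact h0.unique h0'
  have hgdiff : DifferentiableOn ℂ g (Metric.ball (0 : ℂ) 1) := bohr_diffOn hsum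
  set G : ℂ → ℂ := fun z => (g z - b 0) / (1 - (starRingEnd ℂ) (b 0) * g z) with hGdef
  have hden : ∀ z ∈ Metric.ball (0 : ℂ) 1, 1 - (starRingEnd ℂ) (b 0) * g z ≠ 0 := by
    intro z hz h
    have h1 : (1 : ℂ) = (starRingEnd ℂ) (b 0) * g z := sub_eq_zero.mp h
    have h2 : (1 : ℝ) = ‖b 0‖ * ‖g z‖ := by
      calc (1:ℝ) = ‖(1:ℂ)‖ := by simp
        _ = ‖(starRingEnd ℂ) (b 0)‖ * ‖g z‖ := by rw [h1, norm_mul]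
        _ = ‖b 0‖ * ‖g z‖ := by rw [RCLike.norm_conj]
    nlinarith [hgb z hz, norm_nonneg (g z), norm_nonneg (b 0)]
  have hGdiff : DifferentiableOn ℂ G (Metric.ball (0 : ℂ) 1) := by
    apply DifferentiableOn.div
    · exact hgdiff.sub (differentiableOn_const _)
    · exact (differentiableOn_const _).sub ((differentiableOn_const _).mul hgdiff)
    · exact hden
  have hGb : ∀ z ∈ Metric.ball (0 : ℂ) 1, ‖G z‖ ≤ 1 := by
    intro z hz
    rw [hGdef]
    simp only [norm_div]
    rw [div_le_one_iff]
    left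
    constructor
    · exact lt_of_le_of_ne (norm_nonneg _) (Ne.symm (norm_ne_zero_iff.mpr (hden z hz)))
    · exact bohr_moebius_norm hα (hgb z hz)
  have hG0 : G 0 = 0 := by
    rw [hGdef]
    simp [hg0]
  -- the per-radius bound
  have hstep : ∀ ρ : NNReal, 0 < ρ → (ρ : ℝ) < 1 → ‖b n‖ * (ρ : ℝ) ^ n ≤ 1 - ‖b 0‖ ^ 2 := by
    intro ρ hρ0 hρ1
    have hρ0' : (0:ℝ) < ρ := hρ0
    have hsub : closedBall (0:ℂ) ρ ⊆ Metric.ball (0:ℂ) 1 := closedBall_subset_ball hρ1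
    have hq : HasFPowerSeriesOnBall G (cauchyPowerSeries G 0 ρ) 0 ρ :=
      (hGdiff.mono hsub).hasFPowerSeriesOnBall hρ0
    set q := cauchyPowerSeries G 0 (ρ : ℝ) with hqdef
    -- Cauchy estimates
    have hGcont : ContinuousOn G (Metric.ball (0:ℂ) 1) := hGdiff.continuousOn
    have hcm : ∀ θ : ℝ, circleMap 0 (ρ:ℝ) θ ∈ Metric.ball (0:ℂ) 1 := by
      intro θ
      rw [mem_ball_zero_iff]
      rw [norm_circleMap_zero]
      rw [abs_of_pos hρ0']
      exact hρ1
    have hGcirc : Continuous fun θ : ℝ => ‖G (circleMap 0 (ρ:ℝ) θ)‖ := by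
      apply Continuous.norm
      exact hGcont.comp_continuous (continuous_circleMap 0 (ρ:ℝ)) hcm
    have hcb : ∀ k, ‖q.coeff k‖ * (ρ : ℝ) ^ k ≤ 1 := by
      intro k
      have h1 := norm_cauchyPowerSeries_le G 0 (ρ : ℝ) k
      rw [← hqdef] at h1
      have h2 : (∫ θ in (0:ℝ)..2 * Real.pi, ‖G (circleMap 0 (ρ:ℝ) θ)‖)
          ≤ ∫ _ in (0:ℝ)..2 * Real.pi, (1:ℝ) := by
        apply intervalIntegral.integral_mono_on Real.two_pi_pos.le
        · exact hGcirc.intervalIntegrable _ _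
        · exact intervalIntegrable_const
        · intro θ _
          exact hGb _ (hcm θ)
      rw [intervalIntegral.integral_const, smul_eq_mul, mul_one, sub_zero] at h2
      have h3 : ‖q k‖ ≤ (2 * Real.pi)⁻¹ * (2 * Real.pi) * |(ρ:ℝ)|⁻¹ ^ k := by
        calc ‖q k‖ ≤ (2 * Real.pi)⁻¹ * (∫ θ in (0:ℝ)..2 * Real.pi,
              ‖G (circleMap 0 (ρ:ℝ) θ)‖) * |(ρ:ℝ)|⁻¹ ^ k := h1
          _ ≤ (2 * Real.pi)⁻¹ * (2 * Real.pi) * |(ρ:ℝ)|⁻¹ ^ k := by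
              apply mul_le_mul_of_nonneg_right _ (by positivity)
              exact mul_le_mul_of_nonneg_left h2 (by positivity)
      rw [inv_mul_cancel₀ Real.two_pi_pos.ne', one_mul, abs_of_pos hρ0'] at h3
      have h4 : ‖q.coeff k‖ ≤ ((ρ:ℝ)⁻¹) ^ k := by
        rw [← FormalMultilinearSeries.norm_apply_eq_norm_coef]
        exact h3
      calc ‖q.coeff k‖ * (ρ:ℝ) ^ k ≤ ((ρ:ℝ)⁻¹) ^ k * (ρ:ℝ) ^ k := by
            apply mul_le_mul_of_nonneg_right h4 (by positivity)
        _ = 1 := by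
            rw [← mul_pow, inv_mul_cancel₀ hρ0'.ne', one_pow]
    -- set up small radius s
    set s : NNReal := ρ / 2 with hsdef
    have hs0 : 0 < s := by positivity
    have hs0' : (0:ℝ) < s := hs0
    have hsρ : (s : ℝ) < (ρ : ℝ) := by
      rw [hsdef]
      push_cast
      linarith
    have hs1 : (s : ℝ) < 1 := hsρ.trans hρ1
    -- power series of G at radius s
    have hGsum : ∀ z : ℂ, ‖z‖ < (s : ℝ) → HasSum (fun k => q.coeff k * z ^ k) (G z) := by
      intro z hz
      have hz' : z ∈ Metric.eball (0:ℂ) (ρ : ENNReal) := by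
        rw [mem_emetric_ball_zero_iff]
        exact_mod_cast hz.trans hsρ
      have := hq.hasSum hz'
      rw [zero_add] at this
      simpa [FormalMultilinearSeries.apply_eq_pow_smul_coeff, smul_eq_mul, mul_comm]
        using this
    -- norm summability of coefficients of G at radius s
    have hcs : Summable (fun k => ‖q.coeff k‖ * (s : ℝ) ^ k) := by
      refine Summable.of_nonneg_of_le (f := fun k => ((s:ℝ) / (ρ:ℝ)) ^ k)
        (fun k => mul_nonneg (norm_nonneg _) (pow_nonneg hs0'.le _)) ?_ ?_
      · intro k
        have h1 : ‖q.coeff k‖ * (s:ℝ) ^ k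
            = (‖q.coeff k‖ * (ρ:ℝ) ^ k) * ((s:ℝ) / (ρ:ℝ)) ^ k := by
          rw [div_pow, mul_assoc, mul_div_assoc', mul_div_cancel_left₀ _ (pow_pos hρ0' k).ne']
        rw [h1]
        have h2 : (0:ℝ) ≤ ((s:ℝ) / (ρ:ℝ)) ^ k := pow_nonneg (by positivity) _
        nlinarith [hcb k]
      · exact summable_geometric_of_lt_one (by positivity) (by rw [div_lt_one hρ0']; exact hsρ)
    -- series u for 1 - conj (b 0) * g
    set u : ℕ → ℂ := fun k => (if k = 0 then 1 else 0) - (starRingEnd ℂ) (b 0) * b k with hudef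
    have husum : ∀ z : ℂ, ‖z‖ < (s : ℝ) →
        HasSum (fun k => u k * z ^ k) (1 - (starRingEnd ℂ) (b 0) * g z) := by
      intro z hz
      have hz1 : z ∈ Metric.ball (0:ℂ) 1 := mem_ball_zero_iff.mpr (hz.trans hs1)
      have hone : HasSum (fun k => (if k = 0 then (1:ℂ) else 0) * z ^ k) 1 := by
        have := hasSum_single (f := fun k => (if k = 0 then (1:ℂ) else 0) * z ^ k) 0
          (fun k hk => by simp [hk])
        simpa using this
      have := hone.sub (((hsum z hz1)).mul_left ((starRingEnd ℂ) (b 0)))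
      convert this using 1
      case e'_3 => rfl
      funext k
      rw [hudef]
      ring
    -- summability for u at radius s
    have hbs : Summable (fun k => ‖b k‖ * (s:ℝ) ^ k) := bohr_summable hsum hs0'.le hs1
    have hus : Summable (fun k => ‖u k‖ * (s:ℝ) ^ k) := by
      refine Summable.of_nonneg_of_le
        (f := fun k => (if k = 0 then (1:ℝ) else 0) * (s:ℝ) ^ k + ‖b 0‖ * (‖b k‖ * (s:ℝ) ^ k))
        (fun k => mul_nonneg (norm_nonneg _) (pow_nonneg hs0'.le _)) ?_ ?_
      · intro k
        have h1 : ‖u k‖ ≤ (if k = 0 then (1:ℝ) else 0) + ‖b 0‖ * ‖b k‖ := by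
          rw [hudef]
          refine (norm_sub_le _ _).trans ?_
          gcongr
          · split <;> simp
          · rw [norm_mul, RCLike.norm_conj]
        have h2 : (0:ℝ) ≤ (s:ℝ) ^ k := pow_nonneg hs0'.le _
        calc ‖u k‖ * (s:ℝ) ^ k
            ≤ ((if k = 0 then (1:ℝ) else 0) + ‖b 0‖ * ‖b k‖) * (s:ℝ) ^ k := by
              exact mul_le_mul_of_nonneg_right h1 h2
          _ = (if k = 0 then (1:ℝ) else 0) * (s:ℝ) ^ k + ‖b 0‖ * (‖b k‖ * (s:ℝ) ^ k) := by ring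
      · refine Summable.add ?_ (hbs.mul_left _)
        apply summable_of_ne_finset_zero (s := {0})
        intro k hk
        simp only [Finset.mem_singleton] at hk
        simp [hk]
    -- pointwise norm summability
    have hzsum : ∀ (v : ℕ → ℂ), Summable (fun k => ‖v k‖ * (s:ℝ) ^ k) →
        ∀ z : ℂ, ‖z‖ < (s:ℝ) → Summable (fun k => ‖v k * z ^ k‖) := by
      intro v hv z hz
      refine Summable.of_nonneg_of_le (f := fun k => ‖v k‖ * (s:ℝ) ^ k)
        (fun k => norm_nonneg _) ?_ hv
      intro k
      rw [norm_mul, norm_pow]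
      exact mul_le_mul_of_nonneg_left
        (pow_le_pow_left₀ (norm_nonneg z) hz.le k) (norm_nonneg _)
    -- product series
    set w : ℕ → ℂ := fun k => ∑ j ∈ Finset.range (k + 1), u j * q.coeff (k - j) with hwdef
    have hwsum : ∀ z : ℂ, ‖z‖ < (s:ℝ) → HasSum (fun k => w k * z ^ k) (g z - b 0) := by
      intro z hz
      have hz1 : z ∈ Metric.ball (0:ℂ) 1 := mem_ball_zero_iff.mpr (hz.trans hs1)
      have h1 := bohr_hasSum_mul (husum z hz) (hGsum z hz)
        (hzsum u hus z hz) (hzsum q.coeff hcs z hz)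
      have h2 : (1 - (starRingEnd ℂ) (b 0) * g z) * G z = g z - b 0 := by
        rw [hGdef]
        rw [mul_comm, div_mul_cancel₀ _ (hden z hz1)]
      rw [h2] at h1
      exact h1
    have hwn : Summable (fun k => ‖w k‖ * (s:ℝ) ^ k) := by
      have h1 := summable_norm_sum_mul_range_of_summable_norm
        (f := fun k => u k * ((s:ℝ):ℂ) ^ k) (g := fun k => q.coeff k * ((s:ℝ):ℂ) ^ k) ?_ ?_
      · apply Summable.congr h1
        intro k
        have heq : ∑ j ∈ Finset.range (k + 1),
            (u j * ((s:ℝ):ℂ) ^ j) * (q.coeff (k - j) * ((s:ℝ):ℂ) ^ (k - j))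
            = w k * ((s:ℝ):ℂ) ^ k := by
          rw [hwdef, Finset.sum_mul]
          apply Finset.sum_congr rfl
          intro j hj
          rw [Finset.mem_range, Nat.lt_succ_iff] at hj
          have hkj : j + (k - j) = k := Nat.add_sub_cancel' hj
          calc (u j * ((s:ℝ):ℂ) ^ j) * (q.coeff (k - j) * ((s:ℝ):ℂ) ^ (k - j))
              = u j * q.coeff (k - j) * (((s:ℝ):ℂ) ^ j * ((s:ℝ):ℂ) ^ (k - j)) := by ring
            _ = u j * q.coeff (k - j) * ((s:ℝ):ℂ) ^ k := by rw [← pow_add, hkj]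
        rw [heq, norm_mul, norm_pow, Complex.norm_real, Real.norm_eq_abs, abs_of_pos hs0']
      · apply Summable.congr hus
        intro k
        rw [norm_mul, norm_pow, Complex.norm_real, Real.norm_eq_abs, abs_of_pos hs0']
      · apply Summable.congr hcs
        intro k
        rw [norm_mul, norm_pow, Complex.norm_real, Real.norm_eq_abs, abs_of_pos hs0']
    -- direct series for g - b 0
    set b' : ℕ → ℂ := fun k => b k - (if k = 0 then b 0 else 0) with hb'def
    have hb'sum : ∀ z : ℂ, ‖z‖ < (s:ℝ) → HasSum (fun k => b' k * z ^ k) (g z - b 0) := by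
      intro z hz
      have hz1 : z ∈ Metric.ball (0:ℂ) 1 := mem_ball_zero_iff.mpr (hz.trans hs1)
      have hone : HasSum (fun k => (if k = 0 then b 0 else 0) * z ^ k) (b 0) := by
        have := hasSum_single (f := fun k => (if k = 0 then b 0 else 0) * z ^ k) 0
          (fun k hk => by simp [hk])
        simpa using this
      have := (hsum z hz1).sub hone
      convert this using 1
      case e'_3 => rfl
      funext k
      rw [hb'def]
      ring
    have hb'n : Summable (fun k => ‖b' k‖ * (s:ℝ) ^ k) := by
      refine Summable.of_nonneg_of_le
        (f := fun k => ‖b k‖ * (s:ℝ) ^ k + (if k = 0 then ‖b 0‖ else 0) * (s:ℝ) ^ k)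
        (fun k => mul_nonneg (norm_nonneg _) (pow_nonneg hs0'.le _)) ?_ ?_
      · intro k
        have h1 : ‖b' k‖ ≤ ‖b k‖ + (if k = 0 then ‖b 0‖ else 0) := by
          rw [hb'def]
          refine (norm_sub_le _ _).trans ?_
          gcongr
          split <;> simp
        have h2 : (0:ℝ) ≤ (s:ℝ) ^ k := pow_nonneg hs0'.le _
        calc ‖b' k‖ * (s:ℝ) ^ k
            ≤ (‖b k‖ + (if k = 0 then ‖b 0‖ else 0)) * (s:ℝ) ^ k :=
              mul_le_mul_of_nonneg_right h1 h2
          _ = ‖b k‖ * (s:ℝ) ^ k + (if k = 0 then ‖b 0‖ else 0) * (s:ℝ) ^ k := by ring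
      · refine Summable.add hbs ?_
        apply summable_of_ne_finset_zero (s := {0})
        intro k hk
        simp only [Finset.mem_singleton] at hk
        simp [hk]
    -- uniqueness
    have P1 := bohr_hasFPowerSeriesOnBall hs0 hb'sum hb'n
    have P2 := bohr_hasFPowerSeriesOnBall hs0 hwsum hwn
    have hbw : b' = w := bohr_unique P1 P2
    -- coefficient extraction
    have hq0 : q.coeff 0 = 0 := by
      have h1 := hq.coeff_zero 1
      rw [hG0] at h1
      exact h1
    have hbn : b n = (1 - (starRingEnd ℂ) (b 0) * b 0) * q.coeff n := by
      have h1 : b' n = w n := congrFun hbw n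
      have h2 : b' n = b n := by
        rw [hb'def]
        simp [hn.ne']
      have h3 : w n = (1 - (starRingEnd ℂ) (b 0) * b 0) * q.coeff n := by
        show (∑ j ∈ Finset.range (n + 1), u j * q.coeff (n - j)) = _
        rw [Finset.sum_eq_single 0]
        · rw [hudef]
          simp
        · intro j hj hj0
          rw [Finset.mem_range, Nat.lt_succ_iff] at hj
          rcases lt_or_eq_of_le hj with hjn | hjn
          · have : b j = 0 := hmid j (Nat.pos_of_ne_zero hj0) hjn
            rw [hudef]
            simp [hj0, this]
          · rw [hjn, Nat.sub_self, hq0, mul_zero]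
        · intro h
          exact absurd (Finset.mem_range.mpr (Nat.succ_pos n)) h
      rw [← h2, h1, h3]
    -- take norms
    have hcoefnn : (starRingEnd ℂ) (b 0) * b 0 = ((‖b 0‖ ^ 2 : ℝ) : ℂ) := by
      rw [mul_comm, Complex.mul_conj]
      rw [Complex.normSq_eq_norm_sq]
    have hnorm_eq : ‖b n‖ = (1 - ‖b 0‖ ^ 2) * ‖q.coeff n‖ := by
      rw [hbn, hcoefnn]
      rw [norm_mul]
      congr 1
      have : (1 : ℂ) - ((‖b 0‖ ^ 2 : ℝ) : ℂ) = (((1 - ‖b 0‖ ^ 2 : ℝ)) : ℂ) := by push_cast; ring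
      rw [this, Complex.norm_real, Real.norm_eq_abs]
      rw [_root_.abs_of_nonneg]
      nlinarith [norm_nonneg (b 0)]
    rw [hnorm_eq]
    have h5 : (0:ℝ) ≤ 1 - ‖b 0‖ ^ 2 := by nlinarith [norm_nonneg (b 0)]
    calc (1 - ‖b 0‖ ^ 2) * ‖q.coeff n‖ * (ρ:ℝ) ^ n
        = (1 - ‖b 0‖ ^ 2) * (‖q.coeff n‖ * (ρ:ℝ) ^ n) := by ring
      _ ≤ (1 - ‖b 0‖ ^ 2) * 1 := mul_le_mul_of_nonneg_left (hcb n) h5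
      _ = 1 - ‖b 0‖ ^ 2 := mul_one _
  -- pass to the limit ρ → 1
  have hlim : Tendsto (fun ρ : ℝ => ‖b n‖ * ρ ^ n) (nhdsWithin 1 (Set.Iio 1))
      (nhds (‖b n‖ * 1 ^ n)) :=
    ((continuous_const.mul (continuous_pow n)).tendsto 1).mono_left nhdsWithin_le_nhds
  have hev : ∀ᶠ ρ in nhdsWithin (1:ℝ) (Set.Iio 1), ‖b n‖ * ρ ^ n ≤ 1 - ‖b 0‖ ^ 2 := by
    filter_upwards [Ioo_mem_nhdsLT_of_mem (by norm_num : (1:ℝ) ∈ Set.Ioc 0 1)] with ρ hρ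
    have h1 : 0 < (⟨ρ, hρ.1.le⟩ : NNReal) := by
      exact hρ.1
    exact hstep ⟨ρ, hρ.1.le⟩ h1 hρ.2
  have := le_of_tendsto hlim hev
  simpa using this

lemma bohr_omega_pow (n : ℕ) (hn : 0 < n) :
    (Complex.exp (((2 * Real.pi / n : ℝ) : ℂ) * I)) ^ n = 1 := by
  rw [← Complex.exp_nat_mul]
  have h : (n : ℂ) * (((2 * Real.pi / n : ℝ) : ℂ) * I) = 2 * (Real.pi : ℂ) * I := by
    have hn0 : (n : ℂ) ≠ 0 := Nat.cast_ne_zero.mpr hn.ne'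
    push_cast
    field_simp
  rw [h, Complex.exp_two_pi_mul_I]

lemma bohr_omega_eq_one_iff (n : ℕ) (hn : 0 < n) (k : ℕ) :
    (Complex.exp (((2 * Real.pi / n : ℝ) : ℂ) * I)) ^ k = 1 ↔ n ∣ k := by
  rw [← Complex.exp_nat_mul, Complex.exp_eq_one_iff]
  have hπ : (Real.pi : ℂ) ≠ 0 := Complex.ofReal_ne_zero.mpr Real.pi_ne_zero
  have hn0 : (n : ℂ) ≠ 0 := Nat.cast_ne_zero.mpr hn.ne'
  constructor
  · rintro ⟨m, hm⟩
    push_cast at hm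
    have hI : (I : ℂ) ≠ 0 := I_ne_zero
    have hk : (k : ℂ) = m * n := by
      field_simp at hm
      have h2 : (k : ℂ) * (2 * (Real.pi:ℂ) * I) = (m : ℂ) * (n:ℂ) * (2 * (Real.pi:ℂ) * I) := by
        rw [hm]; ring
      have h3 : (2 * (Real.pi:ℂ) * I) ≠ 0 := by
        simp [hπ, hI]
      exact mul_right_cancel₀ h3 h2
    have hk' : (k : ℤ) = m * n := by exact_mod_cast hk
    have : (n : ℤ) ∣ (k : ℤ) := ⟨m, by rw [hk']; ring⟩
    exact_mod_cast this
  · rintro ⟨m, rfl⟩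
    refine ⟨m, ?_⟩
    push_cast
    field_simp

lemma bohr_geom (n : ℕ) (hn : 0 < n) (k : ℕ) :
    (∑ j ∈ Finset.range n, ((Complex.exp (((2 * Real.pi / n : ℝ) : ℂ) * I)) ^ k) ^ j)
      = if n ∣ k then (n : ℂ) else 0 := by
  by_cases hdvd : n ∣ k
  · rw [if_pos hdvd, (bohr_omega_eq_one_iff n hn k).mpr hdvd]
    simp
  · have hx : (Complex.exp (((2 * Real.pi / n : ℝ) : ℂ) * I)) ^ k ≠ 1 :=
      fun h => hdvd ((bohr_omega_eq_one_iff n hn k).mp h)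
    rw [if_neg hdvd, geom_sum_eq hx]
    have h1 : ((Complex.exp (((2 * Real.pi / n : ℝ) : ℂ) * I)) ^ k) ^ n = 1 := by
      rw [← pow_mul, mul_comm k n, pow_mul, bohr_omega_pow n hn, one_pow]
    rw [h1, sub_self, zero_div]

theorem bohr_classical (f : ℂ → ℂ) (a : ℕ → ℂ)
    (hf : AnalyticOn ℂ f (Metric.ball (0 : ℂ) 1))
    (hb : ∀ z ∈ Metric.ball (0 : ℂ) 1, ‖f z‖ ≤ 1)
    (ha : ∀ z ∈ Metric.ball (0 : ℂ) 1, HasSum (fun n => a n * z ^ n) (f z)) :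
    ∀ r : ℝ, 0 ≤ r → r ≤ 1 / 3 → ∑' n : ℕ, ‖a n‖ * r ^ n ≤ 1 := by
  intro r hr0 hr13
  have hr1 : r < 1 := lt_of_le_of_lt hr13 (by norm_num)
  have hf0 : f 0 = a 0 := by
    have h0 := ha 0 (by simp)
    have h0' : HasSum (fun k => a k * (0:ℂ) ^ k) (a 0) := by
      have := hasSum_single (f := fun k => a k * (0:ℂ) ^ k) 0
        (fun k hk => by simp [zero_pow hk])
      simpa using this
    exact h0.unique h0'
  have hA1 : ‖a 0‖ ≤ 1 := by rw [← hf0]; exact hb 0 (by simp)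
  have hsumr : Summable (fun k => ‖a k‖ * r ^ k) := bohr_summable ha hr0 hr1
  rcases lt_or_eq_of_le hA1 with hA | hA
  · -- main case ‖a 0‖ < 1
    have hcoeff : ∀ m : ℕ, 0 < m → ‖a m‖ ≤ 1 - ‖a 0‖ ^ 2 := by
      intro m hm
      have hm0 : (m : ℂ) ≠ 0 := Nat.cast_ne_zero.mpr hm.ne'
      set ω : ℂ := Complex.exp (((2 * Real.pi / m : ℝ) : ℂ) * I) with hω
      have hω1 : ‖ω‖ = 1 := by
        rw [hω, Complex.norm_exp]
        simp
      set gm : ℂ → ℂ := fun z => (m : ℂ)⁻¹ * ∑ j ∈ Finset.range m, f (ω ^ j * z) with hgm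
      have hmem : ∀ (j : ℕ) (z : ℂ), z ∈ Metric.ball (0:ℂ) 1 →
          ω ^ j * z ∈ Metric.ball (0:ℂ) 1 := by
        intro j z hz
        rw [mem_ball_zero_iff] at hz ⊢
        rw [norm_mul, norm_pow, hω1, one_pow, one_mul]
        exact hz
      have hgsum : ∀ z ∈ Metric.ball (0:ℂ) 1,
          HasSum (fun k => (if m ∣ k then a k else 0) * z ^ k) (gm z) := by
        intro z hz
        have h1 : ∀ j ∈ Finset.range m,
            HasSum (fun k => a k * (ω ^ j * z) ^ k) (f (ω ^ j * z)) :=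
          fun j _ => ha _ (hmem j z hz)
        have h2 := (hasSum_sum h1).mul_left ((m:ℂ)⁻¹)
        convert h2 using 1
        case e'_3 => rfl
        funext k
        have h3 : ∀ j ∈ Finset.range m,
            a k * (ω ^ j * z) ^ k = (ω ^ k) ^ j * (a k * z ^ k) := by
          intro j _
          rw [mul_pow, ← pow_mul, mul_comm j k, pow_mul]
          ring
        rw [Finset.sum_congr rfl h3, ← Finset.sum_mul, bohr_geom m hm k]
        by_cases hdvd : m ∣ k
        · rw [if_pos hdvd, if_pos hdvd, ← mul_assoc, inv_mul_cancel₀ hm0, one_mul]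
        · rw [if_neg hdvd, if_neg hdvd, zero_mul, zero_mul, mul_zero]
      have hgb1 : ∀ z ∈ Metric.ball (0:ℂ) 1, ‖gm z‖ ≤ 1 := by
        intro z hz
        rw [hgm]
        simp only [norm_mul, norm_inv]
        have h1 : ‖∑ j ∈ Finset.range m, f (ω ^ j * z)‖ ≤ (m : ℝ) := by
          refine (norm_sum_le _ _).trans ?_
          have : ∀ j ∈ Finset.range m, ‖f (ω ^ j * z)‖ ≤ 1 :=
            fun j _ => hb _ (hmem j z hz)
          calc ∑ j ∈ Finset.range m, ‖f (ω ^ j * z)‖ ≤ ∑ _j ∈ Finset.range m, (1:ℝ) :=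
                Finset.sum_le_sum this
            _ = (m : ℝ) := by simp
        have h2 : ‖(m:ℂ)‖ = (m:ℝ) := by simp
        rw [h2]
        rw [inv_mul_le_iff₀ (by exact_mod_cast hm), mul_one]
        exact h1
      have hmid : ∀ k, 0 < k → k < m → (if m ∣ k then a k else 0) = 0 := by
        intro k h1 h2
        rw [if_neg]
        intro hd
        exact absurd (Nat.le_of_dvd h1 hd) (not_le.mpr h2)
      have hα' : ‖(if m ∣ 0 then a 0 else 0 : ℂ)‖ < 1 := by simpa using hA
      have := bohr_key hm hgsum hgb1 hmid hα'
      simpa using this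
    -- final summation
    rw [Summable.tsum_eq_zero_add hsumr]
    simp only [pow_zero, mul_one]
    have htail : Summable (fun k => ‖a (k+1)‖ * r ^ (k+1)) :=
      (summable_nat_add_iff 1).mpr hsumr
    have hgeo : Summable (fun k : ℕ => (1 - ‖a 0‖^2) * r ^ (k+1)) := by
      apply Summable.mul_left
      exact (summable_nat_add_iff 1).mpr (summable_geometric_of_lt_one hr0 hr1)
    have hle : (∑' k, ‖a (k+1)‖ * r^(k+1)) ≤ ∑' k : ℕ, (1 - ‖a 0‖^2) * r^(k+1) := by
      refine Summable.tsum_le_tsum ?_ htail hgeo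
      intro k
      exact mul_le_mul_of_nonneg_right (hcoeff (k+1) k.succ_pos) (pow_nonneg hr0 _)
    have hgeov : (∑' k : ℕ, (1 - ‖a 0‖^2) * r^(k+1)) = (1 - ‖a 0‖^2) * (r * (1 - r)⁻¹) := by
      rw [tsum_mul_left]
      congr 1
      have h1 : ∀ k : ℕ, r ^ (k+1) = r * r ^ k := fun k => by ring
      rw [tsum_congr h1, tsum_mul_left, tsum_geometric_of_lt_one hr0 hr1]
    have hrr : r * (1 - r)⁻¹ ≤ 1/2 := by
      rw [← div_eq_mul_inv, div_le_iff₀ (by linarith)]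
      linarith
    have hrr0 : 0 ≤ r * (1 - r)⁻¹ := mul_nonneg hr0 (inv_nonneg.mpr (by linarith))
    have hA0 : 0 ≤ ‖a 0‖ := norm_nonneg _
    have h2 : 0 ≤ 1 - ‖a 0‖^2 := by nlinarith
    rw [hgeov] at hle
    nlinarith [hle, sq_nonneg (1 - ‖a 0‖),
      mul_le_mul_of_nonneg_left hrr h2]
  · -- case ‖a 0‖ = 1 : f is constant
    have hdiff : DifferentiableOn ℂ f (Metric.ball (0:ℂ) 1) := bohr_diffOn ha
    have hmax : IsMaxOn (norm ∘ f) (Metric.ball (0:ℂ) 1) 0 := by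
      intro z hz
      simp only [Function.comp_apply]
      calc ‖f z‖ ≤ 1 := hb z hz
        _ = ‖f 0‖ := by rw [hf0]; exact hA.symm
    have heq := Complex.eqOn_of_isPreconnected_of_isMaxOn_norm
      (convex_ball (0:ℂ) 1).isPreconnected isOpen_ball hdiff
      (mem_ball_self one_pos) hmax
    have hzero : ∀ k, k ≠ 0 → a k = 0 := by
      intro k hk
      have hs0 : (0:NNReal) < 1/2 := by norm_num
      have hcoe : ((1/2 : NNReal) : ℝ) = 1/2 := by norm_num
      have h1 : ∀ z : ℂ, ‖z‖ < ((1/2 : NNReal):ℝ) → HasSum (fun j => a j * z ^ j) (f z) := by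
        intro z hz
        rw [hcoe] at hz
        exact ha z (mem_ball_zero_iff.mpr (hz.trans (by norm_num)))
      have h2 : ∀ z : ℂ, ‖z‖ < ((1/2 : NNReal):ℝ) →
          HasSum (fun j => (if j = 0 then a 0 else 0) * z ^ j) (f z) := by
        intro z hz
        rw [hcoe] at hz
        have hz1 : z ∈ Metric.ball (0:ℂ) 1 := mem_ball_zero_iff.mpr (hz.trans (by norm_num))
        have hfz : f z = a 0 := by
          have := heq hz1
          simp only [Function.const_apply] at this
          rw [this, hf0]
        rw [hfz]
        have := hasSum_single (f := fun j => (if j = 0 then a 0 else 0) * z ^ j) 0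
          (fun j hj => by simp [hj])
        simpa using this
      have hn1 : Summable (fun j => ‖a j‖ * ((1/2 : NNReal):ℝ)^j) := by
        rw [hcoe]
        exact bohr_summable ha (by norm_num) (by norm_num)
      have hn2 : Summable (fun j => ‖(if j = 0 then a 0 else 0 : ℂ)‖ * ((1/2 : NNReal):ℝ)^j) := by
        apply summable_of_ne_finset_zero (s := {0})
        intro j hj
        simp only [Finset.mem_singleton] at hj
        simp [hj]
      have huniq := bohr_unique (bohr_hasFPowerSeriesOnBall hs0 h1 hn1)
        (bohr_hasFPowerSeriesOnBall hs0 h2 hn2)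
      have := congrFun huniq k
      simpa [hk] using this
    have hterm : ∀ k, ‖a k‖ * r ^ k = (if k = 0 then ‖a 0‖ else 0) := by
      intro k
      rcases Nat.eq_zero_or_pos k with h | h
      · simp [h]
      · have hk0 : k ≠ 0 := h.ne'
        simp [hk0, hzero k hk0]
    rw [tsum_congr hterm, tsum_ite_eq]
    exact le_of_eq hA
end

section
/- For 0 ≤ γ < 1, if f is analytic on Ω_γ = {z : |z + γ/(1-γ)| < 1/(1-γ)} with |f| ≤ 1, and f(z) = Σ a_n z^n on the unit disk, then |a_n| ≤ (1 - |a_0|²)/(1+γ) for all n ≥ 1. -/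
open Metric Finset
open scoped NNReal ENNReal

noncomputable def mser (b : ℕ → ℂ) : FormalMultilinearSeries ℂ ℂ ℂ :=
  fun k => ContinuousMultilinearMap.mkPiRing ℂ (Fin k) (b k)

lemma mser_coeff (b : ℕ → ℂ) (k : ℕ) : (mser b).coeff k = b k := by
  simp [mser, FormalMultilinearSeries.coeff, ContinuousMultilinearMap.mkPiRing_apply]

lemma mser_apply (b : ℕ → ℂ) (k : ℕ) (z : ℂ) : (mser b k fun _ => z) = b k * z ^ k := by
  simp [mser, ContinuousMultilinearMap.mkPiRing_apply, mul_comm]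

lemma mser_norm (b : ℕ → ℂ) (k : ℕ) : ‖mser b k‖ = ‖b k‖ := by
  simp [mser]

lemma hasFPowerSeriesOnBall_of_hasSum {g : ℂ → ℂ} {b : ℕ → ℂ} {r : ℝ≥0} (hr : 0 < r)
    (h : ∀ z : ℂ, ‖z‖ < r → HasSum (fun m => b m * z ^ m) (g z)) :
    HasFPowerSeriesOnBall g (mser b) 0 (r : ℝ≥0∞) := by
  constructor
  · refine ENNReal.le_of_forall_nnreal_lt (fun s hs => ?_)
    have hs' : (s : ℝ) < r := by exact_mod_cast hs
    have hsum := (h (s : ℝ) (by simpa [abs_of_nonneg s.coe_nonneg] using hs')).summable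
    have h0 : Filter.Tendsto (fun m => ‖b m * (s : ℂ) ^ m‖) Filter.atTop (nhds 0) := by
      simpa using (hsum.tendsto_atTop_zero).norm
    apply (mser b).le_radius_of_tendsto (l := 0)
    have he : (fun m => ‖mser b m‖ * (s : ℝ) ^ m) = fun m => ‖b m * ((s : ℝ) : ℂ) ^ m‖ := by
      funext m
      rw [mser_norm, norm_mul, norm_pow, Complex.norm_real,
        Real.norm_eq_abs, abs_of_nonneg s.coe_nonneg]
    rw [he]; exact h0
  · exact_mod_cast hr
  · intro y hy
    rw [Metric.emetric_ball_nnreal, mem_ball_zero_iff] at hy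
    rw [zero_add]
    have h2 := h y hy
    convert h2 using 1
    rfl
    funext m
    rw [mser_apply]

lemma coeff_unique {g : ℂ → ℂ} {b₁ b₂ : ℕ → ℂ} {r : ℝ≥0} (hr : 0 < r)
    (h₁ : ∀ z : ℂ, ‖z‖ < r → HasSum (fun m => b₁ m * z ^ m) (g z))
    (h₂ : ∀ z : ℂ, ‖z‖ < r → HasSum (fun m => b₂ m * z ^ m) (g z)) : b₁ = b₂ := by
  have e := (hasFPowerSeriesOnBall_of_hasSum hr h₁).hasFPowerSeriesAt.eq_formalMultilinearSeries
    (hasFPowerSeriesOnBall_of_hasSum hr h₂).hasFPowerSeriesAt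
  funext m
  have := congrArg (fun p => FormalMultilinearSeries.coeff p m) e
  simpa [mser_coeff] using this

lemma mobius_norm_lt {u a : ℂ} (hu : ‖u‖ < 1) (ha : ‖a‖ < 1) :
    ‖(u - a) / (1 - (starRingEnd ℂ) a * u)‖ < 1 := by
  have hu2 : u.re * u.re + u.im * u.im < 1 := by
    have h := Complex.sq_norm u
    have : ‖u‖ ^ 2 < 1 := by nlinarith [norm_nonneg u]
    rw [Complex.normSq_apply] at h
    nlinarith
  have ha2 : a.re * a.re + a.im * a.im < 1 := by
    have h := Complex.sq_norm a
    have : ‖a‖ ^ 2 < 1 := by nlinarith [norm_nonneg a]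
    rw [Complex.normSq_apply] at h
    nlinarith
  have hkey : Complex.normSq (u - a) < Complex.normSq (1 - (starRingEnd ℂ) a * u) := by
    simp only [Complex.normSq_apply, Complex.sub_re, Complex.sub_im, Complex.mul_re,
      Complex.mul_im, Complex.one_re, Complex.one_im, Complex.conj_re, Complex.conj_im]
    nlinarith [sq_nonneg (u.re - a.re), sq_nonneg (u.im - a.im)]
  have hden : (0:ℝ) < Complex.normSq (1 - (starRingEnd ℂ) a * u) :=
    lt_of_le_of_lt (Complex.normSq_nonneg _) hkey
  have hden' : (1 - (starRingEnd ℂ) a * u) ≠ 0 := by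
    intro h0; rw [h0] at hden; simp at hden
  rw [norm_div, div_lt_one (by rw [norm_pos_iff]; exact hden')]
  rw [Complex.norm_def, Complex.norm_def]
  exact Real.sqrt_lt_sqrt (Complex.normSq_nonneg _) hkey

lemma schwarz_pick_center {q : ℂ → ℂ} (hd : DifferentiableOn ℂ q (ball (0:ℂ) 1))
    (hlt : ∀ w ∈ ball (0:ℂ) 1, ‖q w‖ < 1) : ‖deriv q 0‖ ≤ 1 - ‖q 0‖ ^ 2 := by
  set a := q 0 with ha_def
  have ha : ‖a‖ < 1 := hlt 0 (by simp)
  have hden : ∀ u : ℂ, ‖u‖ < 1 → (1 - (starRingEnd ℂ) a * u) ≠ 0 := by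
    intro u hu h0
    have : (1:ℂ) = (starRingEnd ℂ) a * u := by linear_combination h0
    have h1 : (1:ℝ) = ‖(starRingEnd ℂ) a * u‖ := by rw [← this]; simp
    rw [norm_mul] at h1
    simp only [RCLike.norm_conj] at h1
    nlinarith [norm_nonneg a, norm_nonneg u]
  set m : ℂ → ℂ := fun u => (u - a) / (1 - (starRingEnd ℂ) a * u) with hm_def
  set F : ℂ → ℂ := fun w => m (q w) with hF_def
  have hF0 : F 0 = 0 := by simp [hF_def, hm_def, ha_def]
  have hdF : DifferentiableOn ℂ F (ball 0 1) := by
    apply DifferentiableOn.div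
    · exact hd.sub (differentiableOn_const a)
    · exact (differentiableOn_const 1).sub ((differentiableOn_const _).mul hd)
    · intro w hw
      exact hden (q w) (hlt w hw)
  have hmaps : Set.MapsTo F (ball 0 1) (ball (F 0) 1) := by
    intro w hw
    rw [hF0, mem_ball_zero_iff]
    exact mobius_norm_lt (hlt w hw) ha
  have hS := Complex.norm_deriv_le_div_of_mapsTo_ball hdF (hmaps.mono_right ball_subset_closedBall) one_pos
  -- compute deriv F 0
  have hqd : DifferentiableAt ℂ q 0 := hd.differentiableAt (ball_mem_nhds _ one_pos)
  have hmd : DifferentiableAt ℂ m a := by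
    apply DifferentiableAt.div
    · fun_prop
    · fun_prop
    · exact hden a ha
  have hderiv_m : deriv m a = (1 - (Complex.normSq a : ℂ))⁻¹ := by
    have hu : HasDerivAt (fun y : ℂ => y - a) 1 a := (hasDerivAt_id a).sub_const a
    have hv : HasDerivAt (fun y : ℂ => 1 - (starRingEnd ℂ) a * y) (-((starRingEnd ℂ) a)) a := by
      have h2 : HasDerivAt (fun y : ℂ => (starRingEnd ℂ) a * y) ((starRingEnd ℂ) a) a := by
        simpa using (hasDerivAt_id a).const_mul ((starRingEnd ℂ) a)
      simpa using h2.const_sub 1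
    have hdm : HasDerivAt m ((1 * (1 - (starRingEnd ℂ) a * a) - (a - a) * (-((starRingEnd ℂ) a))) / (1 - (starRingEnd ℂ) a * a) ^ 2) a := hu.div hv (hden a ha)
    have h1 := hdm.deriv
    rw [h1]
    have h2 : (starRingEnd ℂ) a * a = (Complex.normSq a : ℂ) := by
      rw [mul_comm, Complex.mul_conj]
    rw [h2]
    have h3 : (1 : ℂ) - (Complex.normSq a : ℂ) ≠ 0 := by
      have := hden a ha; rwa [h2] at this
    field_simp
    ring
  have hcomp : deriv F 0 = deriv m a * deriv q 0 := by
    rw [hF_def]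
    exact deriv_comp 0 hmd hqd
  have hnsq : Complex.normSq a < 1 := by
    have := Complex.sq_norm a
    nlinarith [norm_nonneg a]
  have hpos : (0:ℝ) < 1 - Complex.normSq a := by linarith
  have hF1 : ‖deriv F 0‖ = (1 - Complex.normSq a)⁻¹ * ‖deriv q 0‖ := by
    rw [hcomp, norm_mul, hderiv_m]
    congr 1
    rw [norm_inv]
    congr 1
    have : ((1:ℂ) - (Complex.normSq a : ℂ)) = ((1 - Complex.normSq a : ℝ) : ℂ) := by push_cast; ring
    rw [this, Complex.norm_real, Real.norm_eq_abs, abs_of_pos hpos]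
  have hfinal : ‖deriv q 0‖ ≤ 1 - Complex.normSq a := by
    rw [hF1] at hS
    rw [div_one] at hS
    calc ‖deriv q 0‖ = (1 - Complex.normSq a) * ((1 - Complex.normSq a)⁻¹ * ‖deriv q 0‖) := by
          field_simp
      _ ≤ (1 - Complex.normSq a) * 1 := by
          apply mul_le_mul_of_nonneg_left hS hpos.le
      _ = 1 - Complex.normSq a := by ring
  have : ‖q 0‖ ^ 2 = Complex.normSq a := by
    rw [← ha_def, Complex.sq_norm]
  rw [this]
  exact hfinal

lemma mem_eball_one {y : ℂ} (h : ‖y‖ < 1) : y ∈ Metric.eball (0:ℂ) 1 := by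
  rw [mem_eball_zero_iff, ← ofReal_norm_eq_enorm, ENNReal.ofReal_lt_one]
  exact h

lemma wiener {G : ℂ → ℂ} {b : ℕ → ℂ}
    (hG : ∀ z : ℂ, ‖z‖ < 1 → HasSum (fun m => b m * z ^ m) (G z))
    (hlt : ∀ z : ℂ, ‖z‖ < 1 → ‖G z‖ < 1) (n : ℕ) (hn : 1 ≤ n) :
    ‖b n‖ ≤ 1 - ‖b 0‖ ^ 2 := by
  have hn0 : (n:ℝ) ≠ 0 := by
    have : (0:ℝ) < n := by exact_mod_cast hn
    linarith
  set bn : ℕ → ℂ := fun k => b (n * k) with hbn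
  have hrad : (1 : ℝ≥0∞) ≤ (mser bn).radius := by
    refine ENNReal.le_of_forall_nnreal_lt (fun s hs => ?_)
    have hs1 : (s:ℝ) < 1 := by exact_mod_cast hs
    set t : ℝ := (s:ℝ) ^ ((n:ℝ)⁻¹) with ht
    have ht0 : 0 ≤ t := Real.rpow_nonneg s.coe_nonneg _
    have htn : t ^ n = (s:ℝ) := by
      rw [ht, ← Real.rpow_natCast ((s:ℝ) ^ ((n:ℝ)⁻¹)) n, ← Real.rpow_mul s.coe_nonneg,
        inv_mul_cancel₀ hn0, Real.rpow_one]
    have ht1 : t < 1 := Real.rpow_lt_one s.coe_nonneg hs1 (by positivity)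
    have hterm := (hG (t:ℂ) (by
      rw [Complex.norm_real, Real.norm_eq_abs, abs_of_nonneg ht0]; exact ht1)).summable.tendsto_atTop_zero.norm
    have hcomp : Filter.Tendsto (fun k => n * k) Filter.atTop Filter.atTop :=
      Filter.tendsto_atTop_mono (fun k => Nat.le_mul_of_pos_left k (by omega)) Filter.tendsto_id
    have h2 := hterm.comp hcomp
    apply (mser bn).le_radius_of_tendsto (l := 0)
    have he : (fun k => ‖mser bn k‖ * (s:ℝ) ^ k)
        = (fun m => ‖b m * ((t:ℝ):ℂ) ^ m‖) ∘ (fun k => n * k) := by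
      funext k
      simp only [Function.comp_apply]
      rw [mser_norm, norm_mul, norm_pow, Complex.norm_real, Real.norm_eq_abs,
        abs_of_nonneg ht0, pow_mul, htn]
    rw [he]
    simpa using h2
  set Q := mser bn with hQ
  have hQrad : 0 < Q.radius := lt_of_lt_of_le one_pos hrad
  have hQball : HasFPowerSeriesOnBall Q.sum Q 0 1 :=
    (Q.hasFPowerSeriesOnBall hQrad).mono one_pos hrad
  set q := Q.sum with hqdef
  have hq_sum : ∀ w : ℂ, ‖w‖ < 1 → HasSum (fun k => bn k * w ^ k) (q w) := by
    intro w hw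
    have h1 := hQball.hasSum (mem_eball_one hw)
    rw [zero_add] at h1
    convert h1 using 1
    rfl
    funext k
    rw [hQ, mser_apply]
  have hq0 : q 0 = b 0 := by
    have h1 := hq_sum 0 (by norm_num)
    have h2 : HasSum (fun k => bn k * (0:ℂ) ^ k) (bn 0) := by
      convert hasSum_single (f := fun k => bn k * (0:ℂ) ^ k) 0 (fun k hk => ?_) using 1
      · simp
      · simp [zero_pow hk]
    have h3 := h1.unique h2
    rw [h3]
    simp [hbn]
  have hqderiv : deriv q 0 = b n := by
    rw [hQball.hasFPowerSeriesAt.deriv]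
    show ((mser bn 1) fun _ => (1:ℂ)) = b n
    simp [mser, hbn]
  have hqd : DifferentiableOn ℂ q (ball 0 1) := by
    have h1 := hQball.differentiableOn
    rwa [← ENNReal.ofReal_one, Metric.emetric_ball] at h1
  have hqlt : ∀ w ∈ ball (0:ℂ) 1, ‖q w‖ < 1 := by
    intro w hw
    rw [mem_ball_zero_iff] at hw
    obtain ⟨z, hz⟩ := IsAlgClosed.exists_pow_nat_eq w (n := n) (by omega)
    subst hz
    have hzn : ‖z‖ < 1 := by
      by_contra h
      push_neg at h
      have h1 : (1:ℝ) ≤ ‖z‖ ^ n := one_le_pow₀ h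
      rw [← norm_pow] at h1
      linarith
    set ζ : ℂ := Complex.exp (2 * Real.pi * Complex.I / n) with hζdef
    have hζ : IsPrimitiveRoot ζ n := Complex.isPrimitiveRoot_exp n (by omega)
    have hζn : ζ ^ n = 1 := hζ.pow_eq_one
    have hζnorm : ‖ζ‖ = 1 := by
      have h1 : ‖ζ‖ ^ n = 1 := by rw [← norm_pow, hζn, norm_one]
      rcases lt_trichotomy ‖ζ‖ 1 with h | h | h
      · exfalso
        have := pow_lt_one₀ (norm_nonneg ζ) h (n := n) (by omega)
        rw [h1] at this; linarith
      · exact h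
      · exfalso
        have := one_lt_pow₀ h (n := n) (by omega : n ≠ 0)
        rw [h1] at this; linarith
    have hmem : ∀ j : ℕ, ‖ζ ^ j * z‖ < 1 := by
      intro j
      rw [norm_mul, norm_pow, hζnorm, one_pow, one_mul]
      exact hzn
    have havg : HasSum (fun m => (∑ j ∈ range n, b m * (ζ ^ j * z) ^ m) / n)
        ((∑ j ∈ range n, G (ζ ^ j * z)) / n) :=
      (hasSum_sum (fun j _ => hG _ (hmem j))).div_const n
    have hterm_eq : ∀ m, (∑ j ∈ range n, b m * (ζ ^ j * z) ^ m) / (n:ℂ)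
        = if n ∣ m then b m * z ^ m else 0 := by
      intro m
      have hsum : ∑ j ∈ range n, (ζ ^ m) ^ j = if n ∣ m then (n:ℂ) else 0 := by
        by_cases hd : n ∣ m
        · rw [if_pos hd]
          obtain ⟨t, rfl⟩ := hd
          have h1 : ζ ^ (n * t) = 1 := by rw [pow_mul, hζn, one_pow]
          rw [Finset.sum_congr rfl (fun j _ => by rw [h1, one_pow])]
          simp
        · rw [if_neg hd]
          have hne : ζ ^ m ≠ 1 := fun h => hd ((IsPrimitiveRoot.pow_eq_one_iff_dvd hζ m).mp h)
          rw [geom_sum_eq hne]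
          have h1 : (ζ ^ m) ^ n = 1 := by rw [← pow_mul, mul_comm, pow_mul, hζn, one_pow]
          rw [h1]
          simp
      have h2 : ∑ j ∈ range n, b m * (ζ ^ j * z) ^ m = b m * z ^ m * ∑ j ∈ range n, (ζ ^ m) ^ j := by
        rw [Finset.mul_sum]
        apply Finset.sum_congr rfl
        intro j _
        rw [mul_pow, ← pow_mul, mul_comm j m, pow_mul]
        ring
      rw [h2, hsum]
      by_cases hd : n ∣ m
      · have hnC : (n:ℂ) ≠ 0 := Nat.cast_ne_zero.mpr (by omega)
        rw [if_pos hd, if_pos hd, mul_div_assoc, div_self hnC, mul_one]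
      · rw [if_neg hd, if_neg hd]
        simp
    have havg2 : HasSum (fun m => if n ∣ m then b m * z ^ m else 0)
        ((∑ j ∈ range n, G (ζ ^ j * z)) / n) := by
      convert havg using 1
      funext m
      rw [hterm_eq m]
    have hinj : Function.Injective (fun k : ℕ => n * k) := fun x y h =>
      Nat.eq_of_mul_eq_mul_left (by omega) h
    have hzero : ∀ m, m ∉ Set.range (fun k : ℕ => n * k) →
        (if n ∣ m then b m * z ^ m else 0) = 0 := by
      intro m hm
      rw [if_neg]
      rintro ⟨t, ht⟩
      exact hm ⟨t, ht.symm⟩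
    have hqw : HasSum (fun k => bn k * (z ^ n) ^ k) (q (z ^ n)) := hq_sum (z ^ n) hw
    have h5 : HasSum ((fun m => if n ∣ m then b m * z ^ m else 0) ∘ (fun k => n * k)) (q (z ^ n)) := by
      convert hqw using 1
      funext k
      simp only [Function.comp_apply]
      rw [if_pos ⟨k, rfl⟩, ← pow_mul]
    have h6 := (hinj.hasSum_iff hzero).mp h5
    have hqweq : q (z ^ n) = (∑ j ∈ range n, G (ζ ^ j * z)) / n := h6.unique havg2
    rw [hqweq, norm_div]
    have hnn : ‖(n:ℂ)‖ = (n:ℝ) := by simp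
    rw [hnn, div_lt_one (by positivity)]
    calc ‖∑ j ∈ range n, G (ζ ^ j * z)‖ ≤ ∑ j ∈ range n, ‖G (ζ ^ j * z)‖ := norm_sum_le _ _
      _ < ∑ _j ∈ range n, (1:ℝ) := by
          apply Finset.sum_lt_sum_of_nonempty ⟨0, mem_range.mpr (by omega)⟩
          intro j _
          exact hlt _ (hmem j)
      _ = n := by simp
  have hfin := schwarz_pick_center hqd hqlt
  rwa [hqderiv, hq0] at hfin

lemma coeff_le {G : ℂ → ℂ} {b : ℕ → ℂ}
    (hd : DifferentiableOn ℂ G (ball (0:ℂ) 1))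
    (hG : ∀ z : ℂ, ‖z‖ < 1 → HasSum (fun m => b m * z ^ m) (G z))
    (hb1 : ∀ z : ℂ, ‖z‖ < 1 → ‖G z‖ ≤ 1) (n : ℕ) (hn : 1 ≤ n) :
    ‖b n‖ ≤ 1 - ‖b 0‖ ^ 2 := by
  by_cases hstrict : ∀ z : ℂ, ‖z‖ < 1 → ‖G z‖ < 1
  · exact wiener hG hstrict n hn
  · push_neg at hstrict
    obtain ⟨w₀, hw₀, hge⟩ := hstrict
    have hmax : IsMaxOn (norm ∘ G) (ball (0:ℂ) 1) w₀ := by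
      intro y hy
      simp only [Function.comp_apply, Set.mem_setOf_eq]
      rw [mem_ball_zero_iff] at hy
      exact le_trans (hb1 y hy) hge
    have heq := Complex.eqOn_of_isPreconnected_of_isMaxOn_norm
      (convex_ball (0:ℂ) 1).isPreconnected isOpen_ball hd (mem_ball_zero_iff.mpr hw₀) hmax
    have hconst : ∀ z : ℂ, ‖z‖ < ((1:ℝ≥0):ℝ) →
        HasSum (fun m => (if m = 0 then G w₀ else 0) * z ^ m) (G z) := by
      intro z hz
      rw [NNReal.coe_one] at hz
      have h1 : G z = G w₀ := heq (mem_ball_zero_iff.mpr hz)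
      rw [h1]
      convert hasSum_single (f := fun m => (if m = 0 then G w₀ else 0) * z ^ m) 0
        (fun m hm => by simp [hm]) using 1
      simp
    have hbe := coeff_unique one_pos (fun z hz => hG z (by rwa [NNReal.coe_one] at hz)) hconst
    have hb0 : b 0 = G w₀ := by rw [hbe]; simp
    have hbn : b n = 0 := by rw [hbe]; simp; omega
    rw [hbn, hb0, norm_zero]
    have h2 : ‖G w₀‖ ≤ 1 := hb1 w₀ hw₀
    nlinarith [norm_nonneg (G w₀)]

set_option maxHeartbeats 1000000 in
theorem coeff_bound_omega_gamma (γ : ℝ) (hγ : 0 ≤ γ) (hγ1 : γ < 1)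
    (f : ℂ → ℂ) (a : ℕ → ℂ)
    (hf : AnalyticOn ℂ f {z : ℂ | ‖z + γ / (1 - γ)‖ < 1 / (1 - γ)})
    (hb : ∀ z ∈ {z : ℂ | ‖z + γ / (1 - γ)‖ < 1 / (1 - γ)}, ‖f z‖ ≤ 1)
    (ha : ∀ z ∈ Metric.ball (0 : ℂ) 1, HasSum (fun n => a n * z ^ n) (f z)) :
    ∀ n : ℕ, 1 ≤ n → ‖a n‖ ≤ (1 - ‖a 0‖ ^ 2) / (1 + γ) := by
  have h1γ : (0:ℝ) < 1 - γ := by linarith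
  have h2γ : (0:ℝ) < 1 + γ := by linarith
  have h2γC : ((1:ℂ) + γ) ≠ 0 := by
    intro h
    have := congrArg Complex.re h
    simp at this
    linarith
  set Ω := {z : ℂ | ‖z + γ / (1 - γ)‖ < 1 / (1 - γ)} with hΩ
  set φ : ℂ → ℂ := fun w => ((1:ℂ) + γ) * w / (1 + γ * w) with hφ
  have hφden : ∀ w : ℂ, ‖w‖ < 1 → (1 + (γ:ℂ) * w) ≠ 0 := by
    intro w hw h0
    have h1 : (γ:ℂ) * w = -1 := by linear_combination h0
    have h2 : ‖(γ:ℂ) * w‖ = 1 := by rw [h1]; simp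
    rw [norm_mul, Complex.norm_real, Real.norm_eq_abs, abs_of_nonneg hγ] at h2
    nlinarith [norm_nonneg w]
  have hφmem : ∀ w : ℂ, ‖w‖ < 1 → φ w ∈ Ω := by
    intro w hw
    have hw2 : w.re * w.re + w.im * w.im < 1 := by
      have h := Complex.sq_norm w
      have h' : ‖w‖ ^ 2 < 1 := by nlinarith [norm_nonneg w]
      rw [Complex.normSq_apply] at h
      nlinarith
    have hkey : ‖w + (γ:ℂ)‖ < ‖1 + (γ:ℂ) * w‖ := by
      have hsq : Complex.normSq (w + γ) < Complex.normSq (1 + γ * w) := by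
        simp only [Complex.normSq_apply, Complex.add_re, Complex.add_im, Complex.mul_re,
          Complex.mul_im, Complex.one_re, Complex.one_im, Complex.ofReal_re, Complex.ofReal_im]
        nlinarith [mul_pos (by nlinarith : (0:ℝ) < 1 - γ^2)
          (by nlinarith : (0:ℝ) < 1 - (w.re*w.re + w.im*w.im))]
      rw [Complex.norm_def, Complex.norm_def]
      exact Real.sqrt_lt_sqrt (Complex.normSq_nonneg _) hsq
    rw [hΩ, Set.mem_setOf_eq]
    have heq : φ w + (γ:ℂ) / (1 - γ) = (w + γ) / ((1 - γ) * (1 + γ * w)) := by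
      rw [hφ]
      have h1 : ((1:ℂ) - γ) ≠ 0 := by
        intro h
        have := congrArg Complex.re h
        simp at this
        linarith
      field_simp [h1, hφden w hw]
      ring
    rw [heq, norm_div, norm_mul]
    have habs1 : ‖((1:ℂ) - γ)‖ = 1 - γ := by
      rw [show ((1:ℂ) - γ) = ((1 - γ : ℝ) : ℂ) by push_cast; ring, Complex.norm_real,
        Real.norm_eq_abs, abs_of_pos h1γ]
    rw [habs1]
    have hpos : 0 < ‖(1 + (γ:ℂ) * w)‖ := by
      rw [norm_pos_iff]
      exact hφden w hw
    rw [div_lt_div_iff₀ (by positivity) h1γ]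
    nlinarith
  have hφdiff : DifferentiableOn ℂ φ (ball 0 1) := by
    apply DifferentiableOn.div
    · fun_prop
    · fun_prop
    · exact fun w hw => hφden w (mem_ball_zero_iff.mp hw)
  set G : ℂ → ℂ := fun w => f (φ w) with hGdef
  have hfd : DifferentiableOn ℂ f Ω := hf.differentiableOn
  have hGdiff : DifferentiableOn ℂ G (ball 0 1) :=
    hfd.comp hφdiff (fun w hw => hφmem w (mem_ball_zero_iff.mp hw))
  have hGr : ∀ r : ℝ≥0, 0 < r → (r:ℝ) < 1 →
      HasFPowerSeriesOnBall G (cauchyPowerSeries G 0 r) 0 r := by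
    intro r hr0 hr1
    exact (hGdiff.mono (closedBall_subset_ball hr1)).hasFPowerSeriesOnBall hr0
  set b : ℕ → ℂ := (cauchyPowerSeries G 0 ((2:ℝ≥0)⁻¹)).coeff with hbdef
  have hhalf := hGr (2:ℝ≥0)⁻¹ (by norm_num) (by norm_num)
  have hG : ∀ z : ℂ, ‖z‖ < 1 → HasSum (fun m => b m * z ^ m) (G z) := by
    intro z hz
    set r : ℝ≥0 := ⟨(‖z‖ + 1)/2, by positivity⟩ with hr
    have hrc : (r:ℝ) = (‖z‖ + 1)/2 := rfl
    have hr0 : 0 < r := by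
      rw [← NNReal.coe_pos, hrc]
      positivity
    have hrlt : (r:ℝ) < 1 := by rw [hrc]; linarith
    have hzr : ‖z‖ < (r:ℝ) := by rw [hrc]; linarith
    have hball := hGr r hr0 hrlt
    have heq : cauchyPowerSeries G 0 r = cauchyPowerSeries G 0 (2:ℝ≥0)⁻¹ :=
      hball.hasFPowerSeriesAt.eq_formalMultilinearSeries hhalf.hasFPowerSeriesAt
    have h1 := hball.hasSum (y := z)
      (by rw [Metric.emetric_ball_nnreal, mem_ball_zero_iff]; exact hzr)
    rw [zero_add] at h1
    convert h1 using 1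
    rfl
    funext m
    rw [FormalMultilinearSeries.apply_eq_pow_smul_coeff, heq, smul_eq_mul, hbdef]
    ring
  have hGle : ∀ z : ℂ, ‖z‖ < 1 → ‖G z‖ ≤ 1 := fun z hz => hb (φ z) (hφmem z hz)
  have hbk : ∀ k, 1 ≤ k → ‖b k‖ ≤ 1 - ‖b 0‖ ^ 2 := fun k hk => coeff_le hGdiff hG hGle k hk
  -- negative binomial coefficients
  set δ : ℝ := γ / (1 + γ) with hδdef
  have hδ0 : 0 ≤ δ := by positivity
  have hδ1 : δ < 1 := by rw [hδdef, div_lt_one h2γ]; linarith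
  have hδγR : δ * (1+γ) = γ := by rw [hδdef]; field_simp
  clear_value δ
  set c : ℕ → ℕ → ℝ := fun k j => ((j + (k-1)).choose (k-1) : ℝ) * δ^j / (1+γ)^k with hcdef
  have hc0 : ∀ k j, 0 ≤ c k j := by
    intro k j
    rw [hcdef]
    positivity
  clear_value c
  set ψ : ℂ → ℂ := fun z => z / (1 + (γ:ℂ) - γ * z) with hψdef
  clear_value ψ
  have hδγ : ((δ:ℝ):ℂ) * (1 + (γ:ℂ)) = (γ:ℂ) := by
    exact_mod_cast congrArg (Complex.ofReal) hδγR
  have hfact : ∀ z : ℂ, ((1:ℂ)+γ) * (1 - (δ:ℝ) * z) = 1 + γ - γ * z := by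
    intro z
    linear_combination (-z) * hδγ
  have hden3 : ∀ z : ℂ, ‖z‖ < 1 → (1 + (γ:ℂ) - γ * z) ≠ 0 := by
    intro z hz h0
    have h1 : (γ:ℂ) * z = 1 + γ := by linear_combination -h0
    have h2 : ‖(γ:ℂ) * z‖ = ‖(1:ℂ) + γ‖ := by rw [h1]
    have h3 : ‖(1:ℂ) + (γ:ℂ)‖ = 1 + γ := by
      rw [show (1:ℂ) + (γ:ℂ) = ((1+γ:ℝ):ℂ) by push_cast; ring, Complex.norm_real,
        Real.norm_eq_abs, abs_of_pos h2γ]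
    rw [norm_mul, Complex.norm_real, Real.norm_eq_abs, abs_of_nonneg hγ, h3] at h2
    nlinarith [norm_nonneg z]
  have hS1 : ∀ K, 1 ≤ K → ∀ z : ℂ, ‖z‖ < 1 →
      HasSum (fun j => ((c K j : ℝ):ℂ) * z ^ (K + j)) ((ψ z) ^ K) := by
    intro K hK z hz
    have hδz : ‖(δ:ℂ) * z‖ < 1 := by
      rw [norm_mul, Complex.norm_real, Real.norm_eq_abs, abs_of_nonneg hδ0]
      nlinarith [norm_nonneg z]
    have hgeo := hasSum_choose_mul_geometric_of_norm_lt_one (K-1) hδz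
    have h2 := hgeo.mul_left ((z / ((1:ℂ)+γ)) ^ K)
    convert h2 using 1
    · rfl
    · funext j
      rw [hcdef]
      push_cast
      rw [div_pow]
      field_simp
      ring
    · have hψ2 : ψ z = z / (((1:ℂ)+γ) * (1 - (δ:ℝ) * z)) := by
        rw [hψdef]
        simp only
        rw [hfact]
      have hdz : ((1:ℂ) - (δ:ℝ) * z) ≠ 0 := by
        intro h0
        have := hfact z
        rw [h0, mul_zero] at this
        exact hden3 z hz this.symm
      rw [Nat.sub_add_cancel hK, hψ2, one_div, div_pow, div_pow, mul_pow]
      field_simp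
  have hS1R : ∀ K, 1 ≤ K → ∀ t : ℝ, 0 ≤ t → t < 1 →
      HasSum (fun j => c K j * t ^ (K + j)) ((t / ((1+γ) * (1 - δ * t))) ^ K) := by
    intro K hK t ht0 ht1
    have hδt : ‖δ * t‖ < 1 := by
      rw [Real.norm_eq_abs, abs_of_nonneg (by positivity)]
      nlinarith
    have hgeo := hasSum_choose_mul_geometric_of_norm_lt_one (K-1) hδt
    have h2 := hgeo.mul_left ((t / (1+γ)) ^ K)
    convert h2 using 1
    · rfl
    · funext j
      rw [hcdef]
      simp only
      rw [div_pow]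
      field_simp
      ring
    · have hdt : (1:ℝ) - δ * t ≠ 0 := by nlinarith
      rw [Nat.sub_add_cancel hK, one_div, div_pow, div_pow, mul_pow]
      field_simp
  have hCex : ∃ C : ℝ, 0 ≤ C ∧ ∀ k, ‖b k‖ ≤ C * 2 ^ k := by
    have h1 := (hG ((2⁻¹:ℝ):ℂ) (by rw [Complex.norm_real]; norm_num)).summable
    have h2 := h1.tendsto_atTop_zero.norm
    obtain ⟨C, hC⟩ := h2.bddAbove_range
    have hCval : ∀ k, ‖b k‖ * 2⁻¹ ^ k ≤ C := by
      intro k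
      have hk := hC (Set.mem_range_self k)
      rwa [norm_mul, norm_pow, Complex.norm_real, Real.norm_eq_abs,
        abs_of_nonneg (by norm_num : (0:ℝ) ≤ 2⁻¹)] at hk
    refine ⟨C, ?_, fun k => ?_⟩
    · have h00 := hCval 0
      rw [pow_zero, mul_one] at h00
      exact le_trans (norm_nonneg _) h00
    · have hk := hCval k
      have h2k : (0:ℝ) < 2 ^ k := by positivity
      calc ‖b k‖ = ‖b k‖ * ((2:ℝ)⁻¹ * 2) ^ k := by norm_num
        _ = ‖b k‖ * 2⁻¹ ^ k * 2 ^ k := by rw [mul_pow, ← mul_assoc]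
        _ ≤ C * 2 ^ k := mul_le_mul_of_nonneg_right hk h2k.le
  set A : ℕ → ℂ := fun nn => if nn = 0 then b 0 else
    ∑ k ∈ Finset.range (nn+1), (if 1 ≤ k ∧ k ≤ nn then b k * ((c k (nn-k) : ℝ):ℂ) else 0)
    with hAdef
  clear_value A
  have hAsum : ∀ z : ℂ, ‖z‖ < (((8:ℝ≥0)⁻¹:ℝ≥0):ℝ) → HasSum (fun nn => A nn * z ^ nn) (f z) := by
    intro z hz8
    have hz8' : ‖z‖ < (8:ℝ)⁻¹ := by
      have : (((8:ℝ≥0)⁻¹:ℝ≥0):ℝ) = (8:ℝ)⁻¹ := by norm_num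
      rwa [this] at hz8
    have hz1 : ‖z‖ < 1 := lt_trans hz8' (by norm_num)
    obtain ⟨C, hC0, hCk⟩ := hCex
    have htR0 : (0:ℝ) ≤ ‖z‖ := norm_nonneg z
    have hδz8 : δ * ‖z‖ < 8⁻¹ := by nlinarith
    have h78 : (7:ℝ)/8 ≤ 1 - δ * ‖z‖ := by nlinarith
    have hdpos : (0:ℝ) < 1 - δ * ‖z‖ := by nlinarith
    set ψR : ℝ := ‖z‖ / ((1+γ) * (1 - δ * ‖z‖)) with hψR
    have hψR0 : 0 ≤ ψR := by positivity
    have hψR7 : ψR < 7⁻¹ := by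
      rw [hψR, div_lt_iff₀ (by positivity)]
      nlinarith
    have hfactR : (1+γ) * (1 - δ * ‖z‖) = 1 + γ - γ * ‖z‖ := by
      linear_combination (-‖z‖) * hδγR
    have hψznorm : ‖ψ z‖ ≤ ψR := by
      rw [hψdef]
      simp only
      rw [norm_div, hψR]
      have hlow : 1 + γ - γ * ‖z‖ ≤ ‖(1:ℂ) + (γ:ℂ) - γ * z‖ := by
        have h1 : ‖(1:ℂ)+(γ:ℂ)‖ - ‖(γ:ℂ)*z‖ ≤ ‖((1:ℂ)+γ) - γ*z‖ := norm_sub_norm_le _ _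
        have h3 : ‖(1:ℂ) + (γ:ℂ)‖ = 1 + γ := by
          rw [show (1:ℂ) + (γ:ℂ) = ((1+γ:ℝ):ℂ) by push_cast; ring, Complex.norm_real,
            Real.norm_eq_abs, abs_of_pos h2γ]
        have h4 : ‖(γ:ℂ)*z‖ = γ * ‖z‖ := by
          rw [norm_mul, Complex.norm_real, Real.norm_eq_abs, abs_of_nonneg hγ]
        linarith
      rw [hfactR]
      apply div_le_div_of_nonneg_left htR0 ?_ hlow
      · rw [← hfactR]; positivity
    have hψz7 : ‖ψ z‖ < 7⁻¹ := lt_of_le_of_lt hψznorm hψR7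
    have hψz1 : ‖ψ z‖ < 1 := lt_trans hψz7 (by norm_num)
    have hrowR : ∀ k : ℕ, HasSum (fun j => c (k+1) j * ‖z‖ ^ (k+1+j)) (ψR ^ (k+1)) :=
      fun k => hS1R (k+1) (by omega) ‖z‖ htR0 hz1
    set N : ℕ×ℕ → ℝ := fun p => ‖b (p.1+1)‖ * (c (p.1+1) p.2 * ‖z‖ ^ (p.1+1+p.2)) with hN
    have hNnonneg : ∀ p, 0 ≤ N p := by
      intro p
      rw [hN]
      have := hc0 (p.1+1) p.2
      positivity
    have hNsummable : Summable N := by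
      rw [summable_prod_of_nonneg hNnonneg]
      constructor
      · intro k
        simp only [hN]
        exact ((hrowR k).mul_left _).summable
      · have hts : ∀ k, ∑' j, N (k, j) = ‖b (k+1)‖ * ψR^(k+1) := by
          intro k
          simp only [hN]
          exact ((hrowR k).mul_left _).tsum_eq
        have hgeom : Summable (fun k : ℕ => (C * (2/7)) * (2/7)^k) :=
          (summable_geometric_of_lt_one (by norm_num) (by norm_num)).mul_left _
        apply Summable.of_nonneg_of_le ?_ ?_ hgeom
        · intro k
          rw [hts k]
          positivity
        · intro k
          rw [hts k]
          calc ‖b (k+1)‖ * ψR^(k+1) ≤ (C * 2^(k+1)) * (7⁻¹)^(k+1) := by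
                apply mul_le_mul (hCk (k+1)) (pow_le_pow_left₀ hψR0 hψR7.le _)
                  (by positivity) (by positivity)
            _ = (C * (2/7)) * (2/7)^k := by
                rw [div_pow]
                field_simp
                rw [show ((1:ℝ)/7)^(k+1) = ((7:ℝ)^(k+1))⁻¹ by rw [one_div, inv_pow]]
                field_simp
                ring
    set F : ℕ×ℕ → ℂ := fun p => (b (p.1+1) * ((c (p.1+1) p.2 : ℝ):ℂ)) * z ^ (p.1+1+p.2) with hF
    have hFnorm : (fun p => ‖F p‖) = N := by
      funext p
      rw [hF, hN]
      simp only
      rw [norm_mul, norm_mul, norm_pow, Complex.norm_real, Real.norm_eq_abs,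
        abs_of_nonneg (hc0 _ _)]
      ring
    have hFsummable : Summable F := Summable.of_norm (hFnorm ▸ hNsummable)
    obtain ⟨S, hFsum⟩ := hFsummable
    have hrowC : ∀ k : ℕ, HasSum (fun j => F (k, j)) (b (k+1) * (ψ z) ^ (k+1)) := by
      intro k
      have h1 := (hS1 (k+1) (by omega) z hz1).mul_left (b (k+1))
      convert h1 using 1
      rfl
      funext j
      rw [hF]
      simp only
      ring
    have hfib := hFsum.prod_fiberwise hrowC
    have hψsum := hG (ψ z) hψz1
    have hGψ : G (ψ z) = f z := by
      rw [hGdef]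
      simp only
      congr 1
      rw [hφ, hψdef]
      simp only
      have hd3 := hden3 z hz1
      field_simp
      try ring
      rw [← add_mul, show (γ:ℂ) * z + z = z * (1 + γ) by ring, mul_assoc, mul_inv_cancel₀ h2γC, mul_one]
    have htail : HasSum (fun k => b (k+1) * (ψ z)^(k+1)) (f z - b 0) := by
      have h1 := (hasSum_nat_add_iff' (f := fun k => b k * (ψ z)^k) 1).mpr hψsum
      simp only [Finset.range_one, Finset.sum_singleton, pow_zero, mul_one] at h1
      rw [hGψ] at h1
      exact h1
    have hSval : S = f z - b 0 := hfib.unique htail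
    set T : ℕ×ℕ → ℂ := fun p =>
      (if 1 ≤ p.2 ∧ p.2 ≤ p.1 then b p.2 * ((c p.2 (p.1 - p.2) : ℝ):ℂ) else 0) * z ^ p.1 with hT
    have hTi : T ∘ (fun p : ℕ×ℕ => (p.1+1+p.2, p.1+1)) = F := by
      funext p
      simp only [Function.comp_apply, hT, hF]
      rw [if_pos (by omega : 1 ≤ p.1+1 ∧ p.1+1 ≤ p.1+1+p.2)]
      have he : p.1+1+p.2 - (p.1+1) = p.2 := by omega
      rw [he]
    have hi : Function.Injective (fun p : ℕ×ℕ => (p.1+1+p.2, p.1+1)) := by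
      intro p q h
      rw [Prod.ext_iff] at h ⊢
      simp only [Prod.mk.injEq] at h
      obtain ⟨h1, h2⟩ := h
      constructor <;> omega
    have hzeroT : ∀ p, p ∉ Set.range (fun p : ℕ×ℕ => (p.1+1+p.2, p.1+1)) → T p = 0 := by
      intro p hp
      rw [hT]
      simp only
      rw [if_neg, zero_mul]
      intro hcond
      apply hp
      refine ⟨(p.2-1, p.1-p.2), ?_⟩
      rw [Prod.ext_iff]
      constructor
      · simp only
        omega
      · simp only
        omega
    have hTsum : HasSum T (f z - b 0) := by
      rw [← hSval]
      exact (hi.hasSum_iff hzeroT).mp (by rw [hTi]; exact hFsum)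
    have hrowT : ∀ nn : ℕ, HasSum (fun k => T (nn, k))
        ((∑ k ∈ Finset.range (nn+1),
          (if 1 ≤ k ∧ k ≤ nn then b k * ((c k (nn-k) : ℝ):ℂ) else 0)) * z ^ nn) := by
      intro nn
      have h1 := hasSum_sum_of_ne_finset_zero (s := Finset.range (nn+1)) (L := SummationFilter.unconditional ℕ)
        (f := fun k => T (nn, k)) (by
          intro k hk
          rw [hT]
          simp only
          rw [if_neg, zero_mul]
          rw [Finset.mem_range] at hk
          omega)
      convert h1 using 1
      rw [Finset.sum_mul]
      try (apply Finset.sum_congr rfl; intro k _; rw [hT])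
    have hfib2 := hTsum.prod_fiberwise hrowT
    have hfinal := hfib2.add (hasSum_ite_eq (0:ℕ) (b 0))
    have heq2 : (fun nn => A nn * z ^ nn) = fun nn =>
        (∑ k ∈ Finset.range (nn+1),
          (if 1 ≤ k ∧ k ≤ nn then b k * ((c k (nn-k) : ℝ):ℂ) else 0)) * z ^ nn
          + (if nn = 0 then b 0 else 0) := by
      funext nn
      by_cases h0 : nn = 0
      · subst h0
        rw [hAdef]
        simp
      · rw [hAdef]
        simp [h0]
    rw [heq2]
    convert hfinal using 1
    ring
  have haA : a = A := by
    apply coeff_unique (r := (8:ℝ≥0)⁻¹) (by norm_num)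
    · intro z hz
      apply ha z (mem_ball_zero_iff.mpr ?_)
      refine lt_trans hz ?_
      norm_num
    · exact hAsum
  intro n hn
  have han : a n = A n := congrFun haA n
  have ha0 : ‖a 0‖ = ‖b 0‖ := by
    rw [congrFun haA 0, hAdef]
    simp
  have hsum_c : ∑ k ∈ Finset.range (n+1), (if 1 ≤ k ∧ k ≤ n then c k (n-k) else 0)
      = 1/(1+γ) := by
    rw [Finset.sum_range_succ']
    have hg0 : (if 1 ≤ 0 ∧ (0:ℕ) ≤ n then c 0 (n-0) else 0) = 0 := by norm_num
    rw [hg0, add_zero]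
    have hterm : ∀ m ∈ Finset.range n, (if 1 ≤ m+1 ∧ m+1 ≤ n then c (m+1) (n-(m+1)) else 0)
        = (1/(1+γ)) * ((1/(1+γ))^m * δ^(n-1-m) * ((n-1).choose m)) := by
      intro m hm
      rw [Finset.mem_range] at hm
      rw [if_pos (by omega)]
      rw [hcdef]
      simp only
      have e2 : n - (m+1) = n-1-m := by omega
      rw [e2]
      have e1 : n-1-m + (m+1-1) = n-1 := by omega
      rw [e1]
      have e3 : m+1-1 = m := by omega
      rw [e3]
      field_simp
      ring_nf
      rw [inv_pow, mul_assoc _ ((1 + γ) ^ m)⁻¹, mul_assoc _ ((1 + γ) ^ m)⁻¹, inv_mul_cancel₀ (pow_ne_zero m h2γ.ne')]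
      ring
    rw [Finset.sum_congr rfl hterm, ← Finset.mul_sum]
    have hbin := add_pow (1/(1+γ)) δ (n-1)
    rw [show n - 1 + 1 = n from by omega] at hbin
    have hone : 1/(1+γ) + δ = 1 := by field_simp; linarith [hδγR]
    rw [← hbin, hone, one_pow, mul_one]
  rw [han, ha0]
  rw [hAdef]
  simp only [if_neg (by omega : ¬ n = 0)]
  calc ‖∑ k ∈ Finset.range (n+1), (if 1 ≤ k ∧ k ≤ n then b k * ((c k (n-k):ℝ):ℂ) else 0)‖
      ≤ ∑ k ∈ Finset.range (n+1), ‖(if 1 ≤ k ∧ k ≤ n then b k * ((c k (n-k):ℝ):ℂ) else 0)‖ :=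
        norm_sum_le _ _
    _ ≤ ∑ k ∈ Finset.range (n+1), (1 - ‖b 0‖^2) * (if 1 ≤ k ∧ k ≤ n then c k (n-k) else 0) := by
        apply Finset.sum_le_sum
        intro k _
        by_cases hck : 1 ≤ k ∧ k ≤ n
        · rw [if_pos hck, if_pos hck, norm_mul, Complex.norm_real, Real.norm_eq_abs,
            abs_of_nonneg (hc0 _ _)]
          exact mul_le_mul_of_nonneg_right (hbk k hck.1) (hc0 _ _)
        · rw [if_neg hck, if_neg hck, norm_zero, mul_zero]
    _ = (1 - ‖b 0‖^2) * ∑ k ∈ Finset.range (n+1), (if 1 ≤ k ∧ k ≤ n then c k (n-k) else 0) := by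
        rw [Finset.mul_sum]
    _ = (1 - ‖b 0‖^2) * (1/(1+γ)) := by rw [hsum_c]
    _ = (1 - ‖b 0‖^2)/(1+γ) := by ring
end

section
/- For 0 ≤ γ < 1 and any 0 ≤ x ≤ 1 and 0 ≤ r ≤ (1+γ)/(3+γ), the function Ψ(x) = x/(1-r) + (1-x²)r/((1+γ)(1-r)²) satisfies Ψ(x) ≤ 1/(1-r). -/
theorem psi_le (γ : ℝ) (hγ : 0 ≤ γ) (hγ1 : γ < 1) (x : ℝ) (hx0 : 0 ≤ x) (hx1 : x ≤ 1)
    (r : ℝ) (hr0 : 0 ≤ r) (hr : r ≤ (1 + γ) / (3 + γ)) :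
    x / (1 - r) + (1 - x ^ 2) * r / ((1 + γ) * (1 - r) ^ 2) ≤ 1 / (1 - r) := by
  have h3 : (0:ℝ) < 3 + γ := by linarith
  have hr' : r * (3 + γ) ≤ 1 + γ := by
    rw [div_eq_mul_inv] at hr
    calc r * (3 + γ) ≤ (1 + γ) * (3 + γ)⁻¹ * (3 + γ) := by
          exact mul_le_mul_of_nonneg_right hr h3.le
      _ = 1 + γ := by field_simp
  have h1 : 0 < 1 - r := by nlinarith
  have h2 : (0:ℝ) < 1 + γ := by linarith
  rw [div_add_div _ _ (by positivity) (by positivity), div_le_div_iff₀ (by positivity) (by positivity)]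
  nlinarith [mul_nonneg (sub_nonneg.2 hx1) (sub_nonneg.2 (by nlinarith : (1+x)*r ≤ (1+γ)*(1-r))), sq_nonneg (1-r), mul_pos h1 h1, mul_pos h2 (mul_pos h1 h1)]
end

section
/- For 0 ≤ γ < 1, if f is analytic on Ω_γ with |f| ≤ 1 and Taylor coefficients a_n at 0, then for all 0 < r < 1 the discrete Laplace transform majorant satisfies Σ_{n=0}^∞ (Σ_{k=0}^n |a_k|/(n+1)^{k+1}) r^n ≤ (1/r)·ln(1/(1-r)). -/
open Complex intervalIntegral Real Set

lemma exp_int_integral (m : ℤ) (hm : m ≠ 0) :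
    ∫ θ in (0:ℝ)..(2*Real.pi), Complex.exp (m * θ * I) = 0 := by
  have h1 : ∀ θ : ℝ, (m:ℂ) * θ * I = (m*I) * θ := fun θ => by ring
  simp only [h1]
  rw [integral_exp_mul_complex (by simp [hm, Complex.ext_iff] : (m:ℂ)*I ≠ 0)]
  have : (m:ℂ) * I * (2*Real.pi:ℝ) = m * (2 * Real.pi * I) := by push_cast; ring
  rw [this, Complex.exp_int_mul_two_pi_mul_I]
  simp

lemma coeff_integral (f : ℂ → ℂ) (a : ℕ → ℂ)
    (ha : ∀ z ∈ Metric.ball (0:ℂ) 1, HasSum (fun n => a n * z ^ n) (f z))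
    (ρ : ℝ) (hρ0 : 0 ≤ ρ) (hρ1 : ρ < 1)
    (hc : Continuous fun θ : ℝ => f ((ρ:ℂ) * Complex.exp (θ * I))) (m : ℤ) :
    HasSum (fun n : ℕ => if (n:ℤ) = -m then (2*Real.pi : ℝ) • (a n * (ρ:ℂ)^n) else 0)
      (∫ θ in (0:ℝ)..(2*Real.pi),
        f ((ρ:ℂ) * Complex.exp (θ * I)) * Complex.exp (m * θ * I)) := by
  have habs : |ρ| = ρ := _root_.abs_of_nonneg hρ0
  have hmem : ∀ θ : ℝ, (ρ:ℂ) * Complex.exp (θ * I) ∈ Metric.ball (0:ℂ) 1 := by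
    intro θ
    simp [Metric.mem_ball, Complex.norm_exp_ofReal_mul_I, habs, hρ1]
  set F : ℕ → C(ℝ, ℂ) := fun n =>
    ⟨fun θ => a n * ((ρ:ℂ) * Complex.exp (θ*I))^n * Complex.exp (m*θ*I), by fun_prop⟩ with hF
  have hnorm : ∀ n (θ : ℝ), ‖F n θ‖ = ‖a n‖ * ρ^n := by
    intro n θ
    simp [hF, Complex.norm_exp_ofReal_mul_I, habs, mul_pow,
      show ((m:ℂ)*θ*I) = ((m*θ:ℝ):ℂ)*I by push_cast; ring]
  have hsummable : Summable fun n => ‖a n‖ * ρ^n := by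
    have := (ha (ρ:ℂ) (by simpa [habs] using hρ1)).summable
    have h2 := summable_norm_iff.2 this
    simpa [habs] using h2
  have hres : Summable fun n => ‖(F n).restrict
      (⟨Set.uIcc (0:ℝ) (2*Real.pi), isCompact_uIcc⟩ : TopologicalSpace.Compacts ℝ)‖ := by
    refine hsummable.of_nonneg_of_le (fun n => norm_nonneg _) (fun n => ?_)
    rw [ContinuousMap.norm_le _ (by positivity)]
    intro x
    exact le_of_eq (hnorm n x)
  have key := hasSum_intervalIntegral_of_summable_norm (a := 0) (b := 2*Real.pi) hres
  have htsum : ∀ θ : ℝ, ∑' n, F n θ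
      = f ((ρ:ℂ) * Complex.exp (θ * I)) * Complex.exp (m * θ * I) := by
    intro θ
    exact ((ha _ (hmem θ)).mul_right _).tsum_eq
  rw [intervalIntegral.integral_congr (fun θ _ => htsum θ)] at key
  have hint : ∀ n : ℕ, (∫ θ in (0:ℝ)..(2*Real.pi), F n θ)
      = if (n:ℤ) = -m then (2*Real.pi : ℝ) • (a n * (ρ:ℂ)^n) else 0 := by
    intro n
    have hFn : ∀ θ : ℝ, F n θ
        = (a n * (ρ:ℂ)^n) * Complex.exp ((((n:ℤ)+m : ℤ):ℂ) * θ * I) := by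
      intro θ
      rw [show ((((n:ℤ)+m : ℤ):ℂ) * θ * I) = (n:ℂ)*(θ*I) + m*θ*I by push_cast; ring,
        Complex.exp_add, Complex.exp_nat_mul]
      simp only [hF, ContinuousMap.coe_mk]
      ring
    rw [intervalIntegral.integral_congr (fun θ _ => hFn θ)]
    by_cases h : (n:ℤ) = -m
    · have hz : (((n:ℤ)+m : ℤ):ℂ) = 0 := by rw [h]; push_cast; ring
      simp only [hz, zero_mul, Complex.exp_zero, mul_one, if_pos h]
      rw [intervalIntegral.integral_const]
      simp [smul_eq_mul]
    · have hnz : ((n:ℤ)+m : ℤ) ≠ 0 := by omega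
      rw [if_neg h, intervalIntegral.integral_const_mul, exp_int_integral _ hnz, mul_zero]
  rw [funext hint] at key
  exact key

lemma coeff_bound (f : ℂ → ℂ) (a : ℕ → ℂ)
    (ha : ∀ z ∈ Metric.ball (0:ℂ) 1, HasSum (fun n => a n * z ^ n) (f z))
    (hb1 : ∀ z ∈ Metric.ball (0:ℂ) 1, ‖f z‖ ≤ 1)
    (hcont : ∀ ρ : ℝ, 0 ≤ ρ → ρ < 1 → Continuous fun θ : ℝ => f ((ρ:ℂ) * Complex.exp (θ * I)))
    (k : ℕ) (hk : k ≠ 0) : ‖a k‖ ≤ 2 * (1 - ‖a 0‖) := by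
  -- a unit vector rotating a 0 to its norm
  obtain ⟨v, hv1, hv2⟩ : ∃ v : ℂ, ‖v‖ = 1 ∧ v * a 0 = (‖a 0‖ : ℂ) := by
    by_cases h : a 0 = 0
    · exact ⟨1, by simp [h]⟩
    · refine ⟨(‖a 0‖ : ℂ) / a 0, ?_, by field_simp⟩
      have h0 : ‖a 0‖ ≠ 0 := by simp [h]
      rw [norm_div, Complex.norm_real, Real.norm_eq_abs, _root_.abs_of_nonneg (norm_nonneg _),
        div_self h0]
  suffices H : ∀ ρ : ℝ, 0 < ρ → ρ < 1 → ‖a k‖ * ρ^k ≤ 2 * (1 - ‖a 0‖) by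
    have tend : Filter.Tendsto (fun ρ : ℝ => ‖a k‖ * ρ^k) (nhdsWithin 1 (Set.Iio 1))
        (nhds (‖a k‖ * 1^k)) :=
      ((continuous_const.mul (continuous_pow k)).tendsto 1).mono_left nhdsWithin_le_nhds
    have ev : ∀ᶠ ρ in nhdsWithin (1:ℝ) (Set.Iio 1), ‖a k‖ * ρ^k ≤ 2 * (1 - ‖a 0‖) := by
      filter_upwards [Ioo_mem_nhdsLT_of_mem (by constructor <;> norm_num :
        (1:ℝ) ∈ Set.Ioc (0:ℝ) 1)] with ρ hρ
      exact H ρ hρ.1 hρ.2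
    simpa using le_of_tendsto tend ev
  intro ρ hρ0 hρ1
  have hc := hcont ρ hρ0.le hρ1
  set g : ℝ → ℂ := fun θ => f ((ρ:ℂ) * Complex.exp (θ * I)) with hg
  have hmem : ∀ θ : ℝ, (ρ:ℂ) * Complex.exp (θ * I) ∈ Metric.ball (0:ℂ) 1 := by
    intro θ
    simp [Metric.mem_ball, Complex.norm_exp_ofReal_mul_I, _root_.abs_of_nonneg hρ0.le, hρ1]
  -- the three integral identities
  have IA : (∫ θ in (0:ℝ)..(2*Real.pi), g θ * Complex.exp ((-(k:ℤ) : ℤ) * θ * I))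
      = (2*Real.pi : ℝ) • (a k * (ρ:ℂ)^k) := by
    have h0 := coeff_integral f a ha ρ hρ0.le hρ1 hc (-(k:ℤ))
    have : (fun n : ℕ => if (n:ℤ) = -(-(k:ℤ)) then (2*Real.pi : ℝ) • (a n * (ρ:ℂ)^n) else 0)
        = fun n : ℕ => if n = k then (2*Real.pi : ℝ) • (a k * (ρ:ℂ)^k) else 0 := by
      funext n
      by_cases h : n = k <;> simp [h]
    rw [this] at h0
    exact ((hasSum_ite_eq k _).unique h0).symm
  have I0 : (∫ θ in (0:ℝ)..(2*Real.pi), g θ) = (2*Real.pi : ℝ) • a 0 := by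
    have h0 := coeff_integral f a ha ρ hρ0.le hρ1 hc 0
    have : (fun n : ℕ => if (n:ℤ) = -(0:ℤ) then (2*Real.pi : ℝ) • (a n * (ρ:ℂ)^n) else 0)
        = fun n : ℕ => if n = 0 then (2*Real.pi : ℝ) • (a 0) else 0 := by
      funext n
      by_cases h : n = 0 <;> simp [h]
    rw [this] at h0
    have h1 := (hasSum_ite_eq 0 ((2*Real.pi : ℝ) • a 0)).unique h0
    rw [h1]
    refine intervalIntegral.integral_congr fun θ _ => ?_
    simp [hg]
  have IB : (∫ θ in (0:ℝ)..(2*Real.pi), g θ * Complex.exp ((k:ℤ) * θ * I)) = 0 := by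
    have h0 := coeff_integral f a ha ρ hρ0.le hρ1 hc (k:ℤ)
    have : (fun n : ℕ => if (n:ℤ) = -(k:ℤ) then (2*Real.pi : ℝ) • (a n * (ρ:ℂ)^n) else 0)
        = fun _ : ℕ => (0:ℂ) := by
      funext n
      rw [if_neg (by omega)]
    rw [this] at h0
    exact (hasSum_zero.unique h0).symm
  -- assemble
  set e : ℝ → ℂ := fun θ => Complex.exp (((-(k:ℤ) : ℤ) : ℂ) * θ * I) with he
  have hek : Continuous fun θ : ℝ => Complex.exp (((k:ℤ) : ℂ) * θ * I) := by fun_prop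
  have hce : Continuous e := by fun_prop
  have hknz : (-(k:ℤ)) ≠ 0 := by omega
  have hconj : ∀ θ : ℝ, (starRingEnd ℂ) (v * (g θ * Complex.exp (((k:ℤ):ℂ) * θ * I)))
      = (starRingEnd ℂ) (v * g θ) * e θ := by
    intro θ
    rw [show v * (g θ * Complex.exp (((k:ℤ):ℂ) * θ * I))
      = (v * g θ) * Complex.exp (((k:ℤ):ℂ) * θ * I) by ring, map_mul]
    congr 1
    rw [← Complex.exp_conj]
    congr 1
    simp only [map_mul, Complex.conj_I, Complex.conj_ofReal, map_intCast]
    push_cast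
    ring
  have hsplit : ∀ θ : ℝ, (v * g θ + (starRingEnd ℂ) (v * g θ) - 2) * e θ
      = v * (g θ * e θ) + (starRingEnd ℂ) (v * (g θ * Complex.exp (((k:ℤ):ℂ) * θ * I)))
        + (-2) * e θ := by
    intro θ
    rw [hconj θ]
    ring
  have i1 : IntervalIntegrable (fun θ => v * (g θ * e θ)) MeasureTheory.volume 0 (2*Real.pi) :=
    (continuous_const.mul (hc.mul hce)).intervalIntegrable _ _
  have i2 : IntervalIntegrable
      (fun θ => (starRingEnd ℂ) (v * (g θ * Complex.exp (((k:ℤ):ℂ) * θ * I))))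
      MeasureTheory.volume 0 (2*Real.pi) :=
    (Complex.continuous_conj.comp (continuous_const.mul (hc.mul hek))).intervalIntegrable _ _
  have i3 : IntervalIntegrable (fun θ => (-2 : ℂ) * e θ) MeasureTheory.volume 0 (2*Real.pi) :=
    (continuous_const.mul hce).intervalIntegrable _ _
  have J1 : (∫ θ in (0:ℝ)..(2*Real.pi), v * (g θ * e θ)) = v * ((2*Real.pi : ℝ) • (a k * (ρ:ℂ)^k)) := by
    rw [intervalIntegral.integral_const_mul, IA]
  have J2 : (∫ θ in (0:ℝ)..(2*Real.pi),
      (starRingEnd ℂ) (v * (g θ * Complex.exp (((k:ℤ):ℂ) * θ * I)))) = 0 := by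
    have i2' : IntervalIntegrable (fun θ => v * (g θ * Complex.exp (((k:ℤ):ℂ) * θ * I)))
        MeasureTheory.volume 0 (2*Real.pi) :=
      (continuous_const.mul (hc.mul hek)).intervalIntegrable _ _
    have hcomm : (∫ θ in (0:ℝ)..(2*Real.pi),
          (starRingEnd ℂ) (v * (g θ * Complex.exp (((k:ℤ):ℂ) * θ * I))))
        = (starRingEnd ℂ) (∫ θ in (0:ℝ)..(2*Real.pi),
          v * (g θ * Complex.exp (((k:ℤ):ℂ) * θ * I))) :=
      ContinuousLinearMap.intervalIntegral_comp_comm (Complex.conjCLE.toContinuousLinearMap) i2'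
    have hz : (∫ θ in (0:ℝ)..(2*Real.pi), v * (g θ * Complex.exp (((k:ℤ):ℂ) * θ * I))) = 0 := by
      rw [intervalIntegral.integral_const_mul, IB, mul_zero]
    rw [hcomm, hz, map_zero]
  have J3 : (∫ θ in (0:ℝ)..(2*Real.pi), (-2 : ℂ) * e θ) = 0 := by
    rw [intervalIntegral.integral_const_mul, exp_int_integral _ hknz, mul_zero]
  have Jsum : (∫ θ in (0:ℝ)..(2*Real.pi), (v * g θ + (starRingEnd ℂ) (v * g θ) - 2) * e θ)
      = v * ((2*Real.pi : ℝ) • (a k * (ρ:ℂ)^k)) := by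
    rw [intervalIntegral.integral_congr (fun θ _ => hsplit θ),
      intervalIntegral.integral_add (i1.add i2) i3, intervalIntegral.integral_add i1 i2,
      J1, J2, J3]
    ring
  have hre_le : ∀ θ : ℝ, (v * g θ).re ≤ 1 := by
    intro θ
    calc (v * g θ).re ≤ ‖v * g θ‖ := Complex.re_le_norm _
    _ = ‖v‖ * ‖g θ‖ := by rw [norm_mul]
    _ ≤ 1 * 1 := by
        apply mul_le_mul (le_of_eq hv1) (hb1 _ (hmem θ)) (norm_nonneg _) zero_le_one
    _ = 1 := one_mul 1
  have hptnorm : ∀ θ : ℝ, ‖(v * g θ + (starRingEnd ℂ) (v * g θ) - 2) * e θ‖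
      = 2 - 2*(v * g θ).re := by
    intro θ
    rw [norm_mul]
    have : ‖e θ‖ = 1 := by
      show ‖Complex.exp (((-(k:ℤ) : ℤ) : ℂ) * θ * I)‖ = 1
      rw [show (((-(k:ℤ) : ℤ) : ℂ) * θ * I) = (((-(k:ℤ) * θ : ℝ)):ℂ) * I by push_cast; ring]
      exact Complex.norm_exp_ofReal_mul_I _
    rw [this, mul_one, Complex.add_conj]
    rw [show ((2 * (v * g θ).re : ℝ) : ℂ) - 2 = (((2 * (v * g θ).re - 2 : ℝ)) : ℂ) by push_cast; ring]
    rw [Complex.norm_real, Real.norm_eq_abs, abs_of_nonpos (by nlinarith [hre_le θ])]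
    ring
  have hnormle : ‖(∫ θ in (0:ℝ)..(2*Real.pi), (v * g θ + (starRingEnd ℂ) (v * g θ) - 2) * e θ)‖
      ≤ ∫ θ in (0:ℝ)..(2*Real.pi), (2 - 2*(v * g θ).re) := by
    refine le_trans (intervalIntegral.norm_integral_le_integral_norm (by positivity)) ?_
    rw [intervalIntegral.integral_congr (fun θ _ => hptnorm θ)]
  have hvg_int : IntervalIntegrable (fun θ => v * g θ) MeasureTheory.volume 0 (2*Real.pi) :=
    (continuous_const.mul hc).intervalIntegrable _ _
  have hre_int : (∫ θ in (0:ℝ)..(2*Real.pi), (v * g θ).re) = 2*Real.pi * ‖a 0‖ := by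
    have hcomm := ContinuousLinearMap.intervalIntegral_comp_comm Complex.reCLM hvg_int
    have hint : (∫ θ in (0:ℝ)..(2*Real.pi), v * g θ) = (2*Real.pi : ℝ) • (‖a 0‖ : ℂ) := by
      rw [intervalIntegral.integral_const_mul, I0, mul_smul_comm, hv2]
    rw [hint] at hcomm
    have : Complex.reCLM ((2*Real.pi : ℝ) • ((‖a 0‖ : ℝ) : ℂ)) = 2*Real.pi * ‖a 0‖ := by
      rw [Complex.reCLM_apply, Complex.real_smul, ← Complex.ofReal_mul, Complex.ofReal_re]
    rw [this] at hcomm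
    simpa using hcomm
  have hfinal : (∫ θ in (0:ℝ)..(2*Real.pi), (2 - 2*(v * g θ).re))
      = 4*Real.pi - 4*Real.pi*‖a 0‖ := by
    have hcre : Continuous fun θ : ℝ => (v * g θ).re :=
      Complex.continuous_re.comp (continuous_const.mul hc)
    rw [intervalIntegral.integral_sub (intervalIntegrable_const)
      (show IntervalIntegrable (fun θ : ℝ => (2:ℝ) * (v * g θ).re) MeasureTheory.volume 0 (2*Real.pi)
        from (continuous_const.mul hcre).intervalIntegrable _ _),
      intervalIntegral.integral_const_mul, hre_int, intervalIntegral.integral_const]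
    simp only [sub_zero, smul_eq_mul]
    ring
  have hJnorm : ‖v * ((2*Real.pi : ℝ) • (a k * (ρ:ℂ)^k))‖ = 2*Real.pi * (‖a k‖ * ρ^k) := by
    rw [norm_mul, hv1, one_mul, norm_smul, Real.norm_eq_abs,
      _root_.abs_of_nonneg (by positivity), norm_mul, norm_pow, Complex.norm_real,
      Real.norm_eq_abs, _root_.abs_of_nonneg hρ0.le]
  rw [Jsum, hJnorm, hfinal] at hnormle
  nlinarith [Real.pi_pos]

lemma T_le (n : ℕ) : (∑ i ∈ Finset.range n, (1/((n:ℝ)+1))^(i+1)) ≤ 1/2 := by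
  match n with
  | 0 => simp
  | 1 => norm_num
  | (m+2) =>
    have hq : (1/(((m+2:ℕ):ℝ)+1)) ≤ 1/3 := by
      rw [div_le_div_iff₀ (by positivity) (by norm_num)]
      push_cast
      linarith
    calc ∑ i ∈ Finset.range (m+2), (1/(((m+2:ℕ):ℝ)+1))^(i+1)
        ≤ ∑ i ∈ Finset.range (m+2), (1/3:ℝ)^(i+1) :=
          Finset.sum_le_sum fun i _ => pow_le_pow_left₀ (by positivity) hq _
      _ ≤ ∑' i : ℕ, (1/3:ℝ)^(i+1) := by
          refine Summable.sum_le_tsum _ (fun i _ => by positivity) ?_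
          exact ((summable_geometric_of_lt_one (r := (1/3:ℝ)) (by norm_num)
            (by norm_num)).mul_right _).congr (fun i => by rw [pow_succ])
      _ = 1/2 := by
          have h1 : ∀ i : ℕ, (1/3:ℝ)^(i+1) = (1/3:ℝ)^i * (1/3) := fun i => pow_succ _ _
          rw [tsum_congr h1, tsum_mul_right,
            tsum_geometric_of_lt_one (by norm_num) (by norm_num)]
          norm_num

lemma term_le (a : ℕ → ℂ) (h0 : ‖a 0‖ ≤ 1)
    (hk : ∀ k : ℕ, k ≠ 0 → ‖a k‖ ≤ 2*(1 - ‖a 0‖)) (n : ℕ) :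
    (∑ k ∈ Finset.range (n+1), ‖a k‖ / ((n:ℝ)+1)^(k+1)) ≤ 1/((n:ℝ)+1) := by
  have hN : (0:ℝ) < (n:ℝ)+1 := by positivity
  rw [Finset.sum_range_succ']
  have h1 : (∑ i ∈ Finset.range n, ‖a (i+1)‖/((n:ℝ)+1)^(i+1+1))
      ≤ ∑ i ∈ Finset.range n, (2*(1-‖a 0‖)) * (1/((n:ℝ)+1)) * (1/((n:ℝ)+1))^(i+1) := by
    refine Finset.sum_le_sum fun i _ => ?_
    have heq : (2*(1-‖a 0‖)) * (1/((n:ℝ)+1)) * (1/((n:ℝ)+1))^(i+1)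
        = (2*(1-‖a 0‖)) / ((n:ℝ)+1)^(i+1+1) := by
      rw [div_pow, one_pow, mul_one_div, mul_one_div, div_div, ← pow_succ']
    rw [heq]
    exact (div_le_div_iff_of_pos_right (by positivity)).2 (hk (i+1) (by omega))
  have h2 : (∑ i ∈ Finset.range n, (2*(1-‖a 0‖)) * (1/((n:ℝ)+1)) * (1/((n:ℝ)+1))^(i+1))
      = (2*(1-‖a 0‖)) * (1/((n:ℝ)+1)) * (∑ i ∈ Finset.range n, (1/((n:ℝ)+1))^(i+1)) := by
    rw [Finset.mul_sum]
  have h3 : (2*(1-‖a 0‖)) * (1/((n:ℝ)+1)) * (∑ i ∈ Finset.range n, (1/((n:ℝ)+1))^(i+1))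
      ≤ (2*(1-‖a 0‖)) * (1/((n:ℝ)+1)) * (1/2) := by
    have hnn : (0:ℝ) ≤ (2*(1-‖a 0‖)) * (1/((n:ℝ)+1)) :=
      mul_nonneg (by linarith) (by positivity)
    exact mul_le_mul_of_nonneg_left (T_le n) hnn
  have h4 : ‖a 0‖/((n:ℝ)+1)^(0+1) = ‖a 0‖ * (1/((n:ℝ)+1)) := by
    rw [pow_one]
    ring
  calc (∑ i ∈ Finset.range n, ‖a (i+1)‖/((n:ℝ)+1)^(i+1+1)) + ‖a 0‖/((n:ℝ)+1)^(0+1)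
      ≤ (2*(1-‖a 0‖)) * (1/((n:ℝ)+1)) * (1/2) + ‖a 0‖ * (1/((n:ℝ)+1)) := by
        rw [h4]
        exact add_le_add (h1.trans ((le_of_eq h2).trans h3)) le_rfl
    _ = 1/((n:ℝ)+1) := by ring

theorem bohr_laplace_omega_gamma (γ : ℝ) (hγ : 0 ≤ γ) (hγ1 : γ < 1)
    (f : ℂ → ℂ) (a : ℕ → ℂ)
    (hf : AnalyticOn ℂ f {z : ℂ | ‖z + γ / (1 - γ)‖ < 1 / (1 - γ)})
    (hb : ∀ z ∈ {z : ℂ | ‖z + γ / (1 - γ)‖ < 1 / (1 - γ)}, ‖f z‖ ≤ 1)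
    (ha : ∀ z ∈ Metric.ball (0 : ℂ) 1, HasSum (fun n => a n * z ^ n) (f z)) :
    ∀ r : ℝ, 0 < r → r < 1 →
      ∑' n : ℕ, (∑ k ∈ Finset.range (n + 1), ‖a k‖ / (n + 1 : ℝ) ^ (k + 1)) * r ^ n ≤
        (1 / r) * Real.log (1 / (1 - r)) := by
  intro r hr0 hr1
  have h1γ : (0:ℝ) < 1 - γ := by linarith
  have hsub : Metric.ball (0:ℂ) 1 ⊆ {z : ℂ | ‖z + γ / (1 - γ)‖ < 1 / (1 - γ)} := by
    intro z hz
    rw [Metric.mem_ball, dist_zero_right] at hz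
    have habsc : ‖(γ:ℂ)/(1-(γ:ℂ))‖ = γ/(1-γ) := by
      rw [show (1 - (γ:ℂ)) = ((1 - γ : ℝ):ℂ) by push_cast; ring, norm_div,
        Complex.norm_of_nonneg hγ, Complex.norm_of_nonneg h1γ.le]
    have : ‖z + (γ:ℂ)/(1-(γ:ℂ))‖ ≤ ‖z‖ + γ/(1-γ) := by
      rw [← habsc]; exact norm_add_le _ _
    have h2 : ‖z + (γ:ℂ)/(1-(γ:ℂ))‖ < 1 + γ/(1-γ) := by
      calc ‖z + (γ:ℂ)/(1-(γ:ℂ))‖ ≤ ‖z‖ + γ/(1-γ) := this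
      _ < 1 + γ/(1-γ) := by linarith
    have h3 : 1 + γ/(1-γ) = 1/(1-γ) := by field_simp; ring
    rw [Set.mem_setOf_eq]
    rw [h3] at h2
    exact h2
  have hb1 : ∀ z ∈ Metric.ball (0:ℂ) 1, ‖f z‖ ≤ 1 := fun z hz => hb z (hsub hz)
  have h0mem : (0:ℂ) ∈ Metric.ball (0:ℂ) 1 := by simp
  have ha0val : a 0 = f 0 := by
    have h := ha 0 h0mem
    have heq : (fun n : ℕ => a n * (0:ℂ)^n) = fun n : ℕ => if n = 0 then a 0 else 0 := by
      funext n
      cases n <;> simp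
    rw [heq] at h
    exact (hasSum_ite_eq 0 (a 0)).unique h
  have hx1 : ‖a 0‖ ≤ 1 := by rw [ha0val]; exact hb1 0 h0mem
  have hcont : ∀ ρ : ℝ, 0 ≤ ρ → ρ < 1 →
      Continuous fun θ : ℝ => f ((ρ:ℂ) * Complex.exp (θ * Complex.I)) := by
    intro ρ hρ0 hρ1
    refine (hf.continuousOn).comp_continuous (by fun_prop) fun θ => hsub ?_
    rw [Metric.mem_ball, dist_zero_right]
    simp [Complex.norm_exp_ofReal_mul_I, _root_.abs_of_nonneg hρ0, hρ1]
  have hcoef : ∀ k : ℕ, k ≠ 0 → ‖a k‖ ≤ 2*(1 - ‖a 0‖) := coeff_bound f a ha hb1 hcont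
  have hterm := term_le a hx1 hcoef
  have hRS : HasSum (fun n : ℕ => (1/((n:ℝ)+1)) * r^n) ((1/r) * Real.log (1/(1-r))) := by
    have h1 := Real.hasSum_pow_div_log_of_abs_lt_one
      (x := r) (by rw [_root_.abs_of_pos hr0]; exact hr1)
    have h2 := h1.mul_left (1/r)
    have h3 : (fun n : ℕ => (1/r) * (r^(n+1)/((n:ℝ)+1))) = fun n : ℕ => (1/((n:ℝ)+1)) * r^n := by
      funext n
      have : ((n:ℝ)+1) ≠ 0 := by positivity
      field_simp
      ring
    rw [h3] at h2
    rw [show (1:ℝ)/(1-r) = (1-r)⁻¹ from one_div _, Real.log_inv]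
    exact h2
  have hpos : ∀ n : ℕ, 0 ≤ (∑ k ∈ Finset.range (n + 1), ‖a k‖ / (n + 1 : ℝ) ^ (k + 1)) * r ^ n :=
    fun n => mul_nonneg (Finset.sum_nonneg fun k _ => by positivity) (by positivity)
  have hle : ∀ n : ℕ, (∑ k ∈ Finset.range (n + 1), ‖a k‖ / (n + 1 : ℝ) ^ (k + 1)) * r ^ n
      ≤ (1/((n:ℝ)+1)) * r^n :=
    fun n => mul_le_mul_of_nonneg_right (hterm n) (by positivity)
  have hsumL : Summable fun n : ℕ =>
      (∑ k ∈ Finset.range (n + 1), ‖a k‖ / (n + 1 : ℝ) ^ (k + 1)) * r ^ n := by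
    refine Summable.of_nonneg_of_le hpos (fun n => (hle n).trans ?_)
      (summable_geometric_of_lt_one hr0.le hr1)
    have h1 : (1:ℝ)/((n:ℝ)+1) ≤ 1 := by
      rw [div_le_one (by positivity)]
      linarith [Nat.cast_nonneg (α := ℝ) n]
    calc (1/((n:ℝ)+1)) * r^n ≤ 1 * r^n := by
          exact mul_le_mul_of_nonneg_right h1 (by positivity)
      _ = r^n := one_mul _
  calc ∑' n : ℕ, (∑ k ∈ Finset.range (n + 1), ‖a k‖ / (n + 1 : ℝ) ^ (k + 1)) * r ^ n
      ≤ ∑' n : ℕ, (1/((n:ℝ)+1)) * r^n := Summable.tsum_le_tsum hle hsumL hRS.summable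
    _ = (1/r) * Real.log (1/(1-r)) := hRS.tsum_eq
end
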